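/- arXiv:0908.0558 — 4 statements merged into one kernel-verified Lean document; each statement's English description precedes it below -/
import Mathlib

section
/- For every n ≥ 1 and every complex z outside [0,1] ∪ {t}, the function B_n admits the partial fraction decomposition B_n(z) = r*_n/z − r_n/(z−1) + (r_n − r*_n − n)/(z−t). -/
open MeasureTheory Real

/-- The generalized Jacobi weight `w(x;t) = (x-t)^γ x^α (1-x)^β`. -/
noncomputable def genJacobiWeight (α β γ t x : ℝ) : ℝ :=
  (x - t) ^ γ * x ^ α * (1 - x) ^ β

/-- `v'(z) = -α/z - β/(z-1) - γ/(z-t)` where `v(z) = -ln w(z;t)`. -/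
noncomputable def vprime (α β γ t : ℝ) (z : ℂ) : ℂ :=
  -(α : ℂ) / z - (β : ℂ) / (z - 1) - (γ : ℂ) / (z - (t : ℂ))

section Statement7Aux

open Set intervalIntegral Polynomial Filter Topology

variable {α β γ t : ℝ}

lemma contW (hα : 0 < α) (hβ : 0 < β) (ht : t < 0) :
    ContinuousOn (genJacobiWeight α β γ t) (Set.Icc 0 1) := by
  unfold genJacobiWeight
  refine ContinuousOn.mul (ContinuousOn.mul ?_ ?_) ?_
  · exact (continuousOn_id.sub continuousOn_const).rpow_const
      (fun x hx => Or.inl (by have := hx.1; simp only [Pi.sub_apply, id_eq]; linarith))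
  · exact continuousOn_id.rpow_const (fun x _ => Or.inr hα.le)
  · exact (continuousOn_const.sub continuousOn_id).rpow_const (fun x _ => Or.inr hβ.le)

lemma IIpw (hα : 0 < α) (hβ : 0 < β) (ht : t < 0) {q : ℝ → ℝ} (hq : Continuous q) :
    IntervalIntegrable (fun x => q x * genJacobiWeight α β γ t x) volume 0 1 := by
  apply ContinuousOn.intervalIntegrable
  rw [uIcc_of_le (by norm_num : (0:ℝ) ≤ 1)]
  exact hq.continuousOn.mul (contW hα hβ ht)

lemma IIdivt (hα : 0 < α) (hβ : 0 < β) (ht : t < 0) {q : ℝ → ℝ} (hq : Continuous q) :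
    IntervalIntegrable (fun x => q x * genJacobiWeight α β γ t x / (x - t)) volume 0 1 := by
  apply ContinuousOn.intervalIntegrable
  rw [uIcc_of_le (by norm_num : (0:ℝ) ≤ 1)]
  exact (hq.continuousOn.mul (contW hα hβ ht)).div
    (Continuous.continuousOn (by fun_prop) : ContinuousOn (fun x : ℝ => x - t) _)
    (fun x hx => by have := hx.1; intro hc; linarith [sub_eq_zero.mp hc])

lemma IIdiv0 (hα : 0 < α) (hβ : 0 < β) (ht : t < 0) {q : ℝ → ℝ} (hq : Continuous q) :
    IntervalIntegrable (fun x => q x * genJacobiWeight α β γ t x / x) volume 0 1 := by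
  have hc : ContinuousOn (fun y : ℝ => q y * ((y - t) ^ γ * (1 - y) ^ β)) (uIcc 0 1) := by
    rw [uIcc_of_le (by norm_num : (0:ℝ) ≤ 1)]
    refine hq.continuousOn.mul (ContinuousOn.mul ?_ ?_)
    · exact (continuousOn_id.sub continuousOn_const).rpow_const
        (fun x hx => Or.inl (by have := hx.1; simp only [Pi.sub_apply, id_eq]; linarith))
    · exact (continuousOn_const.sub continuousOn_id).rpow_const (fun x _ => Or.inr hβ.le)
  have hbase : IntervalIntegrable (fun y : ℝ => y ^ (α - 1)) volume 0 1 :=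
    intervalIntegral.intervalIntegrable_rpow' (by linarith)
  have h1 := hbase.continuousOn_mul hc
  rw [intervalIntegrable_iff, uIoc_of_le (by norm_num : (0:ℝ) ≤ 1)] at h1 ⊢
  refine h1.congr_fun (fun y hy => ?_) measurableSet_Ioc
  unfold genJacobiWeight
  dsimp only
  rw [Real.rpow_sub_one hy.1.ne']
  ring

lemma IIdiv1 (hα : 0 < α) (hβ : 0 < β) (ht : t < 0) {q : ℝ → ℝ} (hq : Continuous q) :
    IntervalIntegrable (fun x => q x * genJacobiWeight α β γ t x / (1 - x)) volume 0 1 := by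
  have hc : ContinuousOn (fun y : ℝ => q y * ((y - t) ^ γ * y ^ α)) (uIcc 0 1) := by
    rw [uIcc_of_le (by norm_num : (0:ℝ) ≤ 1)]
    refine hq.continuousOn.mul (ContinuousOn.mul ?_ ?_)
    · exact (continuousOn_id.sub continuousOn_const).rpow_const
        (fun x hx => Or.inl (by have := hx.1; simp only [Pi.sub_apply, id_eq]; linarith))
    · exact continuousOn_id.rpow_const (fun x _ => Or.inr hα.le)
  have hbase : IntervalIntegrable (fun y : ℝ => (1 - y) ^ (β - 1)) volume 0 1 := by
    have := (intervalIntegral.intervalIntegrable_rpow'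
      (show (-1:ℝ) < β - 1 by linarith) (a := 0) (b := 1)).comp_sub_left 1
    simpa using this.symm
  have h1 := hbase.continuousOn_mul hc
  rw [intervalIntegrable_iff, uIoc_of_le (by norm_num : (0:ℝ) ≤ 1)] at h1 ⊢
  have hne : ∀ᵐ y : ℝ ∂(volume.restrict (Set.Ioc (0:ℝ) 1)), y ≠ 1 := by
    refine ae_restrict_of_ae ?_
    rw [ae_iff]
    have : {y : ℝ | ¬ y ≠ 1} = {1} := by ext y; simp
    rw [this]; exact Real.volume_singleton
  refine h1.congr ?_
  filter_upwards [hne, (ae_restrict_iff' measurableSet_Ioc).mpr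
    (Filter.Eventually.of_forall fun y (hy : y ∈ Set.Ioc (0:ℝ) 1) => hy)] with y hy1 hy2
  unfold genJacobiWeight
  have h1y : (1 - y) ≠ 0 := sub_ne_zero.mpr (Ne.symm hy1)
  rw [Real.rpow_sub_one h1y]
  ring


lemma orth_lower (hα : 0 < α) (hβ : 0 < β) (ht : t < 0)
    (P : ℕ → Polynomial ℝ) (h : ℕ → ℝ)
    (hmonic : ∀ n, (P n).Monic ∧ (P n).natDegree = n)
    (horth : ∀ m n, (∫ x in (0:ℝ)..1,
        (P m).eval x * (P n).eval x * genJacobiWeight α β γ t x)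
      = if m = n then h n else 0)
    (hII : ∀ q : ℝ → ℝ, Continuous q →
      IntervalIntegrable (fun x => q x * genJacobiWeight α β γ t x) volume 0 1) :
    ∀ (m : ℕ) (Q : Polynomial ℝ), Q.natDegree ≤ m → ∀ n : ℕ, Q.degree < n →
      (∫ x in (0:ℝ)..1, Q.eval x * (P n).eval x * genJacobiWeight α β γ t x) = 0 := by
  intro m
  induction m using Nat.strong_induction_on with
  | _ m ih =>
    intro Q hQm n hQn
    by_cases hQ0 : Q = 0
    · simp [hQ0]
    have hkn : Q.natDegree < n := by
      have hd := Polynomial.degree_eq_natDegree hQ0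
      rw [hd] at hQn
      exact_mod_cast hQn
    set k := Q.natDegree with hk
    set c := Q.leadingCoeff with hc
    set R := Q - Polynomial.C c * P k with hR
    have hPk1 : (P k).coeff k = 1 := by
      have := (hmonic k).1.coeff_natDegree
      rwa [(hmonic k).2] at this
    have hcoeff : ∀ i : ℕ, k ≤ i → R.coeff i = 0 := by
      intro i hik
      rcases eq_or_lt_of_le hik with rfl | hik'
      · simp only [hR, Polynomial.coeff_sub, Polynomial.coeff_C_mul, hPk1, mul_one, hc, ← hk,
          Polynomial.leadingCoeff, sub_self]
      · have h1 : Q.coeff i = 0 := Polynomial.coeff_eq_zero_of_natDegree_lt hik'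
        have h2 : (P k).coeff i = 0 := by
          apply Polynomial.coeff_eq_zero_of_natDegree_lt
          rw [(hmonic k).2]; exact hik'
        simp [hR, Polynomial.coeff_sub, Polynomial.coeff_C_mul, h1, h2]
    have hRdeg : R.degree < (k : ℕ) :=
      (Polynomial.degree_lt_iff_coeff_zero R k).mpr
        (fun i hi => hcoeff i (by exact_mod_cast hi))
    have hsplit : ∀ x : ℝ, Q.eval x = R.eval x + c * (P k).eval x := by
      intro x; simp only [hR, Polynomial.eval_sub, Polynomial.eval_mul, Polynomial.eval_C]; ring
    have hIR : IntervalIntegrable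
        (fun x => R.eval x * (P n).eval x * genJacobiWeight α β γ t x) volume 0 1 :=
      hII _ (R.continuous.mul (P n).continuous)
    have hIP : IntervalIntegrable
        (fun x => c * ((P k).eval x * (P n).eval x * genJacobiWeight α β γ t x)) volume 0 1 := by
      have := (hII _ ((P k).continuous.mul (P n).continuous)).const_mul c
      simpa [mul_assoc] using this
    have heq : (∫ x in (0:ℝ)..1, Q.eval x * (P n).eval x * genJacobiWeight α β γ t x)
        = (∫ x in (0:ℝ)..1, R.eval x * (P n).eval x * genJacobiWeight α β γ t x)
          + ∫ x in (0:ℝ)..1, c * ((P k).eval x * (P n).eval x * genJacobiWeight α β γ t x) := by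
      rw [← intervalIntegral.integral_add hIR hIP]
      apply intervalIntegral.integral_congr
      intro x _
      dsimp only
      rw [hsplit x]; ring
    rw [heq]
    have hPint : (∫ x in (0:ℝ)..1,
        c * ((P k).eval x * (P n).eval x * genJacobiWeight α β γ t x)) = 0 := by
      rw [intervalIntegral.integral_const_mul, horth k n, if_neg (Nat.ne_of_lt hkn), mul_zero]
    have hRint : (∫ x in (0:ℝ)..1,
        R.eval x * (P n).eval x * genJacobiWeight α β γ t x) = 0 := by
      by_cases hR0 : R = 0
      · simp [hR0]
      · have hRk : R.natDegree < k := by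
          have := Polynomial.degree_eq_natDegree hR0
          rw [this] at hRdeg
          exact_mod_cast hRdeg
        have hk0 : 0 < k := Nat.pos_of_ne_zero (by omega)
        exact ih (k - 1) (by omega) R (by omega) n
          (lt_trans hRdeg (by exact_mod_cast hkn))
    rw [hRint, hPint, add_zero]
lemma deriv_int (hα : 0 < α) (hβ : 0 < β) (ht : t < 0)
    (P : ℕ → Polynomial ℝ) (h : ℕ → ℝ)
    (hmonic : ∀ n, (P n).Monic ∧ (P n).natDegree = n)
    (horth : ∀ m n, (∫ x in (0:ℝ)..1,
        (P m).eval x * (P n).eval x * genJacobiWeight α β γ t x)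
      = if m = n then h n else 0)
    (n' : ℕ) :
    (∫ x in (0:ℝ)..1, ((P n' * P (n'+1)).derivative).eval x * genJacobiWeight α β γ t x)
      = (n' + 1 : ℝ) * h n' := by
  have hII : ∀ q : ℝ → ℝ, Continuous q →
      IntervalIntegrable (fun x => q x * genJacobiWeight α β γ t x) volume 0 1 :=
    fun q hq => IIpw hα hβ ht hq
  have horthlow := orth_lower hα hβ ht P h hmonic horth hII
  have hd : (P n' * P (n'+1)).derivative
      = (P n').derivative * P (n'+1) + P n' * (P (n'+1)).derivative :=
    Polynomial.derivative_mul
  -- decompose derivative of P (n'+1)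
  set D := (P (n'+1)).derivative with hD
  set R := D - Polynomial.C ((n'+1 : ℕ) : ℝ) * P n' with hRdef
  have hcoeffP : ∀ k, (P k).coeff k = 1 := by
    intro k
    have := (hmonic k).1.coeff_natDegree
    rwa [(hmonic k).2] at this
  have hcoeffR : ∀ i : ℕ, n' ≤ i → R.coeff i = 0 := by
    intro i hi
    have hDc : D.coeff i = (P (n'+1)).coeff (i+1) * ((i : ℝ)+1) :=
      Polynomial.coeff_derivative _ _
    rcases eq_or_lt_of_le hi with rfl | hlt
    · rw [hRdef, Polynomial.coeff_sub, hDc, Polynomial.coeff_C_mul]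
      simp only [hcoeffP]
      push_cast
      ring
    · have h1 : (P (n'+1)).coeff (i+1) = 0 := by
        apply Polynomial.coeff_eq_zero_of_natDegree_lt
        rw [(hmonic (n'+1)).2]; omega
      have h2 : (P n').coeff i = 0 := by
        apply Polynomial.coeff_eq_zero_of_natDegree_lt
        rw [(hmonic n').2]; omega
      rw [hRdef, Polynomial.coeff_sub, hDc, h1, Polynomial.coeff_C_mul, h2]
      ring
  have hRdeg : R.degree < (n' : ℕ) :=
    (Polynomial.degree_lt_iff_coeff_zero R n').mpr
      (fun i hi => hcoeffR i (by exact_mod_cast hi))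
  -- first integral is zero
  have hT1 : (∫ x in (0:ℝ)..1,
      ((P n').derivative).eval x * (P (n'+1)).eval x * genJacobiWeight α β γ t x) = 0 := by
    apply horthlow ((P n').derivative).natDegree _ le_rfl
    calc ((P n').derivative).degree ≤ (P n').degree := Polynomial.degree_derivative_le
    _ = (n' : ℕ) := by rw [Polynomial.degree_eq_natDegree (hmonic n').1.ne_zero, (hmonic n').2]
    _ < ((n'+1 : ℕ) : WithBot ℕ) := by exact_mod_cast Nat.lt_succ_self n'
  -- second integral
  have hT2 : (∫ x in (0:ℝ)..1,
      (P n').eval x * D.eval x * genJacobiWeight α β γ t x) = (n' + 1 : ℝ) * h n' := by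
    have hsplit : ∀ x : ℝ, (P n').eval x * D.eval x
        = R.eval x * (P n').eval x + ((n'+1 : ℕ) : ℝ) * ((P n').eval x * (P n').eval x) := by
      intro x
      simp only [hRdef, Polynomial.eval_sub, Polynomial.eval_mul, Polynomial.eval_C]
      ring
    have hI1 : IntervalIntegrable
        (fun x => R.eval x * (P n').eval x * genJacobiWeight α β γ t x) volume 0 1 :=
      hII _ (R.continuous.mul (P n').continuous)
    have hI2 : IntervalIntegrable
        (fun x => ((n'+1 : ℕ) : ℝ) * ((P n').eval x * (P n').eval x * genJacobiWeight α β γ t x))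
        volume 0 1 := by
      have := (hII _ ((P n').continuous.mul (P n').continuous)).const_mul ((n'+1 : ℕ) : ℝ)
      simpa [mul_assoc] using this
    have heq : (∫ x in (0:ℝ)..1, (P n').eval x * D.eval x * genJacobiWeight α β γ t x)
        = (∫ x in (0:ℝ)..1, R.eval x * (P n').eval x * genJacobiWeight α β γ t x)
          + ∫ x in (0:ℝ)..1,
            ((n'+1 : ℕ) : ℝ) * ((P n').eval x * (P n').eval x * genJacobiWeight α β γ t x) := by
      rw [← intervalIntegral.integral_add hI1 hI2]
      apply intervalIntegral.integral_congr
      intro x _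
      dsimp only
      rw [hsplit x]; ring
    rw [heq]
    have hz : (∫ x in (0:ℝ)..1,
        R.eval x * (P n').eval x * genJacobiWeight α β γ t x) = 0 :=
      horthlow R.natDegree R le_rfl n' hRdeg
    rw [hz, zero_add, intervalIntegral.integral_const_mul, horth n' n', if_pos rfl]
    push_cast
    ring
  -- combine
  have hIT1 : IntervalIntegrable
      (fun x => ((P n').derivative).eval x * (P (n'+1)).eval x * genJacobiWeight α β γ t x)
      volume 0 1 := hII _ (((P n').derivative).continuous.mul (P (n'+1)).continuous)
  have hIT2 : IntervalIntegrable
      (fun x => (P n').eval x * D.eval x * genJacobiWeight α β γ t x) volume 0 1 :=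
    hII _ ((P n').continuous.mul D.continuous)
  have heq2 : (∫ x in (0:ℝ)..1,
      ((P n' * P (n'+1)).derivative).eval x * genJacobiWeight α β γ t x)
      = (∫ x in (0:ℝ)..1,
          ((P n').derivative).eval x * (P (n'+1)).eval x * genJacobiWeight α β γ t x)
        + ∫ x in (0:ℝ)..1, (P n').eval x * D.eval x * genJacobiWeight α β γ t x := by
    rw [← intervalIntegral.integral_add hIT1 hIT2]
    apply intervalIntegral.integral_congr
    intro x _
    dsimp only
    rw [hd]
    simp only [Polynomial.eval_add, Polynomial.eval_mul]
    ring
  rw [heq2, hT1, hT2, zero_add]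


lemma key_real (hα : 0 < α) (hβ : 0 < β) (ht : t < 0)
    (P : ℕ → Polynomial ℝ) (h : ℕ → ℝ)
    (hmonic : ∀ n, (P n).Monic ∧ (P n).natDegree = n)
    (horth : ∀ m n, (∫ x in (0:ℝ)..1,
        (P m).eval x * (P n).eval x * genJacobiWeight α β γ t x)
      = if m = n then h n else 0)
    (n' : ℕ) :
    γ * (∫ y in (0:ℝ)..1,
        (P n').eval y * (P (n'+1)).eval y * genJacobiWeight α β γ t y / (y - t))
      = β * (∫ y in (0:ℝ)..1,
          (P n').eval y * (P (n'+1)).eval y * genJacobiWeight α β γ t y / (1 - y))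
        - α * (∫ y in (0:ℝ)..1,
            (P n').eval y * (P (n'+1)).eval y * genJacobiWeight α β γ t y / y)
        - (n' + 1 : ℝ) * h n' := by
  set w := genJacobiWeight α β γ t with hw
  set Q := P n' * P (n'+1) with hQ
  have hqc : Continuous fun y : ℝ => (P n').eval y * (P (n'+1)).eval y :=
    (P n').continuous.mul (P (n'+1)).continuous
  have hQev : ∀ y : ℝ, Q.eval y = (P n').eval y * (P (n'+1)).eval y := by
    intro y; rw [hQ, Polynomial.eval_mul]
  set G := fun y : ℝ => Q.eval y * w y with hG
  set G' := fun y : ℝ => (Q.derivative.eval y * w y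
      + γ * ((P n').eval y * (P (n'+1)).eval y * w y / (y - t))
      + α * ((P n').eval y * (P (n'+1)).eval y * w y / y))
      - β * ((P n').eval y * (P (n'+1)).eval y * w y / (1 - y)) with hG'
  -- derivative
  have hderiv : ∀ y ∈ Ioo (0:ℝ) 1, HasDerivAt G (G' y) y := by
    intro y hy
    have hy0 : (0:ℝ) < y := hy.1
    have hy1 : y < 1 := hy.2
    have hyt : (0:ℝ) < y - t := by linarith
    have hy1' : (0:ℝ) < 1 - y := by linarith
    have hA : HasDerivAt (fun u : ℝ => (u - t) ^ γ) (γ * (y - t) ^ (γ - 1)) y := by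
      have h2 := Real.hasDerivAt_rpow_const (x := y - t) (p := γ) (Or.inl hyt.ne')
      have h1 : HasDerivAt (fun u : ℝ => u - t) 1 y := (hasDerivAt_id y).sub_const t
      have := h2.comp y h1
      simpa [Function.comp_def] using this
    have hBd : HasDerivAt (fun u : ℝ => u ^ α) (α * y ^ (α - 1)) y :=
      Real.hasDerivAt_rpow_const (Or.inl hy0.ne')
    have hC : HasDerivAt (fun u : ℝ => (1 - u) ^ β) (-(β * (1 - y) ^ (β - 1))) y := by
      have h2 := Real.hasDerivAt_rpow_const (x := 1 - y) (p := β) (Or.inl hy1'.ne')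
      have h1 : HasDerivAt (fun u : ℝ => 1 - u) (-1) y := by
        simpa [Pi.sub_def] using (hasDerivAt_const y (1:ℝ)).sub (hasDerivAt_id y)
      have := h2.comp y h1
      simpa [Function.comp_def] using this
    have hwd : HasDerivAt w
        ((γ * (y - t) ^ (γ - 1) * y ^ α + (y - t) ^ γ * (α * y ^ (α - 1))) * (1 - y) ^ β
          + (y - t) ^ γ * y ^ α * (-(β * (1 - y) ^ (β - 1)))) y := by
      rw [hw]
      unfold genJacobiWeight
      exact (hA.mul hBd).mul hC
    have hQd : HasDerivAt (fun u : ℝ => Q.eval u) (Q.derivative.eval y) y :=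
      Q.hasDerivAt y
    have := hQd.mul hwd
    refine this.congr_deriv ?_
    rw [hG']
    simp only [hQev y]
    rw [hw]
    unfold genJacobiWeight
    rw [Real.rpow_sub_one hyt.ne', Real.rpow_sub_one hy0.ne', Real.rpow_sub_one hy1'.ne']
    field_simp
    ring
  -- integrability of G'
  have hint : IntervalIntegrable G' volume 0 1 := by
    rw [hG']
    exact (((IIpw hα hβ ht Q.derivative.continuous).add
        ((IIdivt hα hβ ht hqc).const_mul γ)).add
        ((IIdiv0 hα hβ ht hqc).const_mul α)).sub
        ((IIdiv1 hα hβ ht hqc).const_mul β)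
  -- continuity of G on Icc
  have hGc : ContinuousOn G (Icc 0 1) := by
    rw [hG, hw]
    exact Q.continuous.continuousOn.mul (contW hα hβ ht)
  have hG0 : G 0 = 0 := by
    rw [hG, hw]
    unfold genJacobiWeight
    norm_num [Real.zero_rpow hα.ne']
  have hG1 : G 1 = 0 := by
    rw [hG, hw]
    unfold genJacobiWeight
    norm_num [Real.zero_rpow hβ.ne']
  have hlim0 : Tendsto G (nhdsWithin 0 (Ioi (0:ℝ))) (nhds 0) := by
    have h₁ : ContinuousWithinAt G (Icc 0 1) 0 :=
      hGc 0 (by constructor <;> norm_num)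
    have h₂ : nhdsWithin (0:ℝ) (Ioi (0:ℝ)) ≤ nhdsWithin (0:ℝ) (Icc (0:ℝ) 1) :=
      nhdsWithin_le_of_mem (Filter.mem_of_superset
        (Ioc_mem_nhdsGT_of_mem (by constructor <;> norm_num : (0:ℝ) ∈ Ico (0:ℝ) 1))
        Ioc_subset_Icc_self)
    have h₃ := h₁.tendsto.mono_left h₂; rwa [hG0] at h₃
  have hlim1 : Tendsto G (nhdsWithin 1 (Iio (1:ℝ))) (nhds 0) := by
    have h₁ : ContinuousWithinAt G (Icc 0 1) 1 :=
      hGc 1 (by constructor <;> norm_num)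
    have h₂ : nhdsWithin (1:ℝ) (Iio (1:ℝ)) ≤ nhdsWithin (1:ℝ) (Icc (0:ℝ) 1) :=
      nhdsWithin_le_of_mem (Filter.mem_of_superset
        (Ico_mem_nhdsLT_of_mem (by constructor <;> norm_num : (1:ℝ) ∈ Ioc (0:ℝ) 1))
        Ico_subset_Icc_self)
    have h₃ := h₁.tendsto.mono_left h₂; rwa [hG1] at h₃
  have hFTC : (∫ y in (0:ℝ)..1, G' y) = 0 := by
    rw [intervalIntegral.integral_eq_sub_of_hasDerivAt_of_tendsto (by norm_num) hderiv hint
      hlim0 hlim1]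
    ring
  -- split the integral
  have hIa : IntervalIntegrable (fun y => Q.derivative.eval y * w y) volume 0 1 :=
    IIpw hα hβ ht Q.derivative.continuous
  have hIb : IntervalIntegrable
      (fun y => γ * ((P n').eval y * (P (n'+1)).eval y * w y / (y - t))) volume 0 1 :=
    (IIdivt hα hβ ht hqc).const_mul γ
  have hIc : IntervalIntegrable
      (fun y => α * ((P n').eval y * (P (n'+1)).eval y * w y / y)) volume 0 1 :=
    (IIdiv0 hα hβ ht hqc).const_mul α
  have hId : IntervalIntegrable
      (fun y => β * ((P n').eval y * (P (n'+1)).eval y * w y / (1 - y))) volume 0 1 :=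
    (IIdiv1 hα hβ ht hqc).const_mul β
  have hsplit : (∫ y in (0:ℝ)..1, G' y)
      = ((∫ y in (0:ℝ)..1, Q.derivative.eval y * w y)
          + γ * (∫ y in (0:ℝ)..1, (P n').eval y * (P (n'+1)).eval y * w y / (y - t))
          + α * (∫ y in (0:ℝ)..1, (P n').eval y * (P (n'+1)).eval y * w y / y))
        - β * (∫ y in (0:ℝ)..1, (P n').eval y * (P (n'+1)).eval y * w y / (1 - y)) := by
    rw [hG']
    rw [intervalIntegral.integral_sub ((hIa.add hIb).add hIc) hId,
      intervalIntegral.integral_add (hIa.add hIb) hIc,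
      intervalIntegral.integral_add hIa hIb,
      intervalIntegral.integral_const_mul, intervalIntegral.integral_const_mul,
      intervalIntegral.integral_const_mul]
  have hDI : (∫ y in (0:ℝ)..1, Q.derivative.eval y * w y) = (n' + 1 : ℝ) * h n' := by
    rw [hQ, hw]
    exact deriv_int hα hβ ht P h hmonic horth n'
  rw [hsplit, hDI] at hFTC
  linarith

lemma IIC {g : ℝ → ℝ} {a b : ℝ} (hg : IntervalIntegrable g volume a b) (c : ℂ) :
    IntervalIntegrable (fun y => c * ((g y : ℝ) : ℂ)) volume a b := by
  rw [intervalIntegrable_iff] at hg ⊢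
  exact (hg.ofReal (𝕜 := ℂ)).const_mul c

end Statement7Aux

open Set intervalIntegral Polynomial Filter Topology

theorem statement7
    (α β γ t : ℝ) (hα : 0 < α) (hβ : 0 < β) (ht : t < 0)
    (P : ℕ → Polynomial ℝ) (h : ℕ → ℝ)
    (hmonic : ∀ n, (P n).Monic ∧ (P n).natDegree = n)
    (hpos : ∀ n, 0 < h n)
    (horth : ∀ m n, (∫ x in (0:ℝ)..1,
        (P m).eval x * (P n).eval x * genJacobiWeight α β γ t x)
      = if m = n then h n else 0)
    (B : ℕ → ℂ → ℂ)
    (hB : ∀ n, 1 ≤ n → ∀ z : ℂ, B n z = (1 / (h (n - 1) : ℂ)) *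
      ∫ y in (0:ℝ)..1, (vprime α β γ t z - vprime α β γ t (y : ℂ)) / (z - (y : ℂ))
        * Complex.ofReal ((P (n - 1)).eval y) * Complex.ofReal ((P n).eval y)
        * Complex.ofReal (genJacobiWeight α β γ t y))
    (r rs : ℕ → ℝ)
    (hr : ∀ n, 1 ≤ n → r n = β / h (n - 1) *
      ∫ y in (0:ℝ)..1, (P (n - 1)).eval y * (P n).eval y * genJacobiWeight α β γ t y / (1 - y))
    (hrs : ∀ n, 1 ≤ n → rs n = α / h (n - 1) *
      ∫ y in (0:ℝ)..1, (P (n - 1)).eval y * (P n).eval y * genJacobiWeight α β γ t y / y)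
    :
    ∀ n : ℕ, 1 ≤ n → ∀ z : ℂ, (∀ x ∈ Set.Icc (0:ℝ) 1, z ≠ (x : ℂ)) → z ≠ (t : ℂ) →
      B n z = (rs n : ℂ) / z - (r n : ℂ) / (z - 1)
        + ((r n : ℂ) - (rs n : ℂ) - (n : ℂ)) / (z - (t : ℂ)) := by
  intro n hn z hz hzt
  obtain ⟨n', rfl⟩ : ∃ n', n = n' + 1 := ⟨n - 1, by omega⟩
  have hB' := hB (n'+1) (by omega) z
  have hr' := hr (n'+1) (by omega)
  have hrs' := hrs (n'+1) (by omega)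
  simp only [Nat.add_sub_cancel] at hB' hr' hrs'
  set w := genJacobiWeight α β γ t with hwdef
  set p1 := fun y : ℝ => (P n').eval y with hp1
  set p2 := fun y : ℝ => (P (n'+1)).eval y with hp2
  set f := fun y : ℝ => p1 y * p2 y * w y with hf
  have hqc : Continuous fun y : ℝ => p1 y * p2 y := (P n').continuous.mul (P (n'+1)).continuous
  -- nonvanishing facts about z
  have hz0 : z ≠ 0 := by
    have := hz 0 (by constructor <;> norm_num)
    simpa using this
  have hz1 : z - 1 ≠ 0 := by
    have := hz 1 (by constructor <;> norm_num)
    simpa [sub_ne_zero] using this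
  have hztne : z - (t:ℂ) ≠ 0 := sub_ne_zero.mpr hzt
  have hHne : ((h n' : ℝ) : ℂ) ≠ 0 := Complex.ofReal_ne_zero.mpr (hpos n').ne'
  -- real integrals
  set I1 := ∫ y in (0:ℝ)..1, f y / y with hI1
  set I2 := ∫ y in (0:ℝ)..1, f y / (1 - y) with hI2
  set I3 := ∫ y in (0:ℝ)..1, f y / (y - t) with hI3
  -- step 1: rewrite the complex integral
  have hRint1 : IntervalIntegrable (fun y => f y / y) volume 0 1 := IIdiv0 hα hβ ht hqc
  have hRint2 : IntervalIntegrable (fun y => f y / (y - 1)) volume 0 1 := by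
    have h2 := IIdiv1 (γ := γ) hα hβ ht hqc
    have : (fun y : ℝ => f y / (y - 1)) = fun y => -(f y / (1 - y)) := by
      funext y
      rw [show y - 1 = -(1 - y) by ring, div_neg]
    rw [this]
    exact h2.neg
  have hRint3 : IntervalIntegrable (fun y => f y / (y - t)) volume 0 1 := IIdivt hα hβ ht hqc
  have hCint1 := IIC hRint1 ((α : ℂ) / z)
  have hCint2 := IIC hRint2 ((β : ℂ) / (z - 1))
  have hCint3 := IIC hRint3 ((γ : ℂ) / (z - (t:ℂ)))
  have hcongr : (∫ y in (0:ℝ)..1, (vprime α β γ t z - vprime α β γ t (y : ℂ)) / (z - (y : ℂ))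
        * Complex.ofReal ((P n').eval y) * Complex.ofReal ((P (n'+1)).eval y)
        * Complex.ofReal (w y))
      = ∫ y in (0:ℝ)..1, (((α : ℂ) / z) * ((f y / y : ℝ) : ℂ)
          + ((β : ℂ) / (z - 1)) * ((f y / (y - 1) : ℝ) : ℂ)
          + ((γ : ℂ) / (z - (t:ℂ))) * ((f y / (y - t) : ℝ) : ℂ)) := by
    apply intervalIntegral.integral_congr_ae
    have hne1 : ∀ᵐ y : ℝ ∂volume, y ≠ 1 := by
      rw [ae_iff]
      have : {y : ℝ | ¬ y ≠ 1} = {1} := by ext y; simp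
      rw [this]; exact Real.volume_singleton
    filter_upwards [hne1] with y hy1 hmem
    rw [uIoc_of_le (by norm_num : (0:ℝ) ≤ 1)] at hmem
    have hy0 : 0 < y := hmem.1
    have hylt : y < 1 := lt_of_le_of_ne hmem.2 hy1
    have hyc0 : (y:ℂ) ≠ 0 := Complex.ofReal_ne_zero.mpr hy0.ne'
    have hyc1 : (y:ℂ) - 1 ≠ 0 := by
      rw [sub_ne_zero]
      exact_mod_cast hylt.ne
    have hyct : (y:ℂ) - (t:ℂ) ≠ 0 := by
      rw [sub_ne_zero]
      exact_mod_cast (show y ≠ t by intro hc; rw [hc] at hy0; linarith)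
    have hzy : z - (y:ℂ) ≠ 0 := sub_ne_zero.mpr (hz y ⟨hy0.le, hmem.2⟩)
    have comp : ∀ (a u v : ℂ), u ≠ 0 → v ≠ 0 → (-a/u - (-a/v)) = a/u/v * (u - v) := by
      intro a u v hu hv
      field_simp
      ring
    have hsum : vprime α β γ t z - vprime α β γ t (y:ℂ)
        = (α:ℂ)/z/(y:ℂ) * (z-(y:ℂ)) + (β:ℂ)/(z-1)/((y:ℂ)-1) * ((z-1)-((y:ℂ)-1))
          + (γ:ℂ)/(z-(t:ℂ))/((y:ℂ)-(t:ℂ)) * ((z-(t:ℂ))-((y:ℂ)-(t:ℂ))) := by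
      unfold vprime
      rw [← comp (α:ℂ) z (y:ℂ) hz0 hyc0, ← comp (β:ℂ) (z-1) ((y:ℂ)-1) hz1 hyc1,
        ← comp (γ:ℂ) (z-(t:ℂ)) ((y:ℂ)-(t:ℂ)) hztne hyct]
      ring
    have hker : (vprime α β γ t z - vprime α β γ t (y:ℂ)) / (z - (y:ℂ))
        = (α:ℂ)/z/(y:ℂ) + (β:ℂ)/(z-1)/((y:ℂ)-1) + (γ:ℂ)/(z-(t:ℂ))/((y:ℂ)-(t:ℂ)) := by
      rw [div_eq_iff hzy, hsum]
      ring
    rw [hker]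
    simp only [hf, hp1, hp2]
    push_cast
    ring
  -- step 2: split
  have hsplit : (∫ y in (0:ℝ)..1, (((α : ℂ) / z) * ((f y / y : ℝ) : ℂ)
          + ((β : ℂ) / (z - 1)) * ((f y / (y - 1) : ℝ) : ℂ)
          + ((γ : ℂ) / (z - (t:ℂ))) * ((f y / (y - t) : ℝ) : ℂ)))
      = ((α : ℂ) / z) * (I1 : ℝ) + ((β : ℂ) / (z - 1)) * ((-I2 : ℝ) : ℂ)
        + ((γ : ℂ) / (z - (t:ℂ))) * ((I3 : ℝ) : ℂ) := by
    rw [intervalIntegral.integral_add (hCint1.add hCint2) hCint3,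
      intervalIntegral.integral_add hCint1 hCint2,
      intervalIntegral.integral_const_mul, intervalIntegral.integral_const_mul,
      intervalIntegral.integral_const_mul,
      intervalIntegral.integral_ofReal, intervalIntegral.integral_ofReal,
      intervalIntegral.integral_ofReal]
    have hI2' : (∫ y in (0:ℝ)..1, f y / (y - 1)) = -I2 := by
      rw [hI2, ← intervalIntegral.integral_neg]
      apply intervalIntegral.integral_congr
      intro y _
      dsimp only
      rw [show y - 1 = -(1 - y) by ring, div_neg]
    rw [hI1, hI2', hI3]
  -- step 3: key real identity
  have hkeyR := key_real hα hβ ht P h hmonic horth n'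
  rw [← hwdef] at hkeyR
  have hkey : (γ : ℂ) * (I3 : ℝ) = (β : ℂ) * (I2 : ℝ) - (α : ℂ) * (I1 : ℝ)
      - ((n' : ℂ) + 1) * ((h n' : ℝ) : ℂ) := by
    have : γ * I3 = β * I2 - α * I1 - (n' + 1 : ℝ) * h n' := by
      rw [hI1, hI2, hI3]
      simpa only [hf, hp1, hp2] using hkeyR
    exact_mod_cast congrArg (fun x : ℝ => (x : ℂ)) this
  -- assemble
  rw [hB', hcongr, hsplit, hr', hrs']
  push_cast
  have hterm : ((γ : ℂ) / (z - (t:ℂ))) * ((I3 : ℝ) : ℂ)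
      = ((β : ℂ) * (I2 : ℝ) - (α : ℂ) * (I1 : ℝ) - ((n' : ℂ) + 1) * ((h n' : ℝ) : ℂ))
        / (z - (t:ℂ)) := by
    rw [div_mul_eq_mul_div, hkey]
  rw [hterm]
  field_simp
  ring
end

section
/- For every n ≥ 1 the following two identities hold: (r*_n)² − α r*_n = β_n R*_n R*_{n−1} and r_n² + β r_n = β_n R_n R_{n−1}. -/
open MeasureTheory Real

theorem statement9
    (α β γ t : ℝ) (hα : 0 < α) (hβ : 0 < β) (ht : t < 0)
    (P : ℕ → Polynomial ℝ) (h : ℕ → ℝ)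
    (hmonic : ∀ n, (P n).Monic ∧ (P n).natDegree = n)
    (hpos : ∀ n, 0 < h n)
    (horth : ∀ m n, (∫ x in (0:ℝ)..1,
        (P m).eval x * (P n).eval x * genJacobiWeight α β γ t x)
      = if m = n then h n else 0)
    (a b : ℕ → ℝ) (hb0 : b 0 = 0)
    (hrec : ∀ n, ∀ x : ℝ, x * (P n).eval x
      = (P (n + 1)).eval x + a n * (P n).eval x + b n * (P (n - 1)).eval x)
    (R Rs r rs : ℕ → ℝ)
    (hR : ∀ n, R n = β / h n *
      ∫ y in (0:ℝ)..1, ((P n).eval y) ^ 2 * genJacobiWeight α β γ t y / (1 - y))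
    (hRs : ∀ n, Rs n = α / h n *
      ∫ y in (0:ℝ)..1, ((P n).eval y) ^ 2 * genJacobiWeight α β γ t y / y)
    (hr : ∀ n, 1 ≤ n → r n = β / h (n - 1) *
      ∫ y in (0:ℝ)..1, (P (n - 1)).eval y * (P n).eval y * genJacobiWeight α β γ t y / (1 - y))
    (hrs : ∀ n, 1 ≤ n → rs n = α / h (n - 1) *
      ∫ y in (0:ℝ)..1, (P (n - 1)).eval y * (P n).eval y * genJacobiWeight α β γ t y / y)
    :
    ∀ n : ℕ, 1 ≤ n →
      (rs n) ^ 2 - α * rs n = b n * (Rs n * Rs (n - 1)) ∧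
      (r n) ^ 2 + β * r n = b n * (R n * R (n - 1)) := by
  classical
  set w : ℝ → ℝ := genJacobiWeight α β γ t with hwdef
  have hwmeas : Measurable w := by rw [hwdef]; unfold genJacobiWeight; fun_prop
  have huIoc : Set.uIoc (0:ℝ) 1 = Set.Ioc (0:ℝ) 1 := Set.uIoc_of_le (by norm_num)
  have hw0 : w 0 = 0 := by
    rw [hwdef]; unfold genJacobiWeight; rw [Real.zero_rpow hα.ne']; ring
  have hw1 : w 1 = 0 := by
    rw [hwdef]; unfold genJacobiWeight
    rw [show (1:ℝ) - 1 = 0 by ring, Real.zero_rpow hβ.ne']; ring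
  have hwnn : ∀ y ∈ Set.Ioc (0:ℝ) 1, 0 ≤ w y := by
    intro y hy
    rw [hwdef]; unfold genJacobiWeight
    exact mul_nonneg (mul_nonneg (Real.rpow_nonneg (by linarith [hy.1]) _)
      (Real.rpow_nonneg hy.1.le _)) (Real.rpow_nonneg (by linarith [hy.2]) _)
  have hP0 : P 0 = 1 := by
    have h0 := (hmonic 0).2
    have hc : (P 0).coeff 0 = 1 := by
      have := (hmonic 0).1.coeff_natDegree; rwa [h0] at this
    rw [Polynomial.eq_C_of_natDegree_le_zero h0.le, hc, map_one]
  have hcoeffP : ∀ n, (P n).coeff n = 1 := by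
    intro n
    have := (hmonic n).1.coeff_natDegree; rwa [(hmonic n).2] at this
  have hcoeffP' : ∀ n m, n < m → (P n).coeff m = 0 := fun n m hm =>
    Polynomial.coeff_eq_zero_of_natDegree_lt (by rw [(hmonic n).2]; exact hm)
  have hpmeas : ∀ q : Polynomial ℝ, Measurable fun y : ℝ => q.eval y :=
    fun q => (Polynomial.continuous q).measurable
  -- integrability of P m * P n * w
  have hself : ∀ n, IntervalIntegrable (fun y => (P n).eval y * (P n).eval y * w y)
      volume 0 1 := by
    intro n
    by_contra hcon
    have := intervalIntegral.integral_undef hcon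
    rw [horth n n, if_pos rfl] at this
    exact absurd this (hpos n).ne'
  have hii : ∀ m n, IntervalIntegrable (fun y => (P m).eval y * (P n).eval y * w y)
      volume 0 1 := by
    intro m n
    have hg : IntervalIntegrable (fun y =>
        (1/2) * ((P m).eval y * (P m).eval y * w y) +
        (1/2) * ((P n).eval y * (P n).eval y * w y)) volume 0 1 :=
      ((hself m).const_mul _).add ((hself n).const_mul _)
    apply hg.mono_fun'
    · exact (((hpmeas (P m)).mul (hpmeas (P n))).mul hwmeas).aestronglyMeasurable
    · filter_upwards [ae_restrict_mem measurableSet_uIoc] with y hy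
      rw [huIoc] at hy
      have hwy := hwnn y hy
      have h1 : ‖(P m).eval y * (P n).eval y * w y‖
          = |(P m).eval y * (P n).eval y| * w y := by
        rw [Real.norm_eq_abs, abs_mul, abs_of_nonneg hwy]
      rw [h1]
      rcases abs_cases ((P m).eval y * (P n).eval y) with ⟨he, _⟩ | ⟨he, _⟩ <;> rw [he] <;>
        nlinarith [sq_nonneg ((P m).eval y - (P n).eval y),
          sq_nonneg ((P m).eval y + (P n).eval y), hwy,
          mul_nonneg (sq_nonneg ((P m).eval y - (P n).eval y)) hwy,
          mul_nonneg (sq_nonneg ((P m).eval y + (P n).eval y)) hwy]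
  -- main structural lemma: integrating a polynomial against P m
  have keyB : ∀ (q : Polynomial ℝ) (m : ℕ),
      IntervalIntegrable (fun y => q.eval y * (P m).eval y * w y) volume 0 1 ∧
      (q.natDegree ≤ m →
        (∫ y in (0:ℝ)..1, q.eval y * (P m).eval y * w y) = q.coeff m * h m) := by
    have main : ∀ d (q : Polynomial ℝ), q.natDegree ≤ d → ∀ m,
        IntervalIntegrable (fun y => q.eval y * (P m).eval y * w y) volume 0 1 ∧
        (q.natDegree ≤ m →
          (∫ y in (0:ℝ)..1, q.eval y * (P m).eval y * w y) = q.coeff m * h m) := by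
      intro d
      induction d with
      | zero =>
        intro q hq m
        have hq' : q = Polynomial.C (q.coeff 0) := Polynomial.eq_C_of_natDegree_le_zero hq
        have hfe : (fun y => q.eval y * (P m).eval y * w y)
            = fun y => q.coeff 0 * ((P 0).eval y * (P m).eval y * w y) := by
          funext y
          conv_lhs => rw [hq']
          rw [hP0]; simp [mul_assoc]
        constructor
        · rw [hfe]; exact (hii 0 m).const_mul _
        · intro _
          rw [hfe, intervalIntegral.integral_const_mul, horth 0 m]
          rcases Nat.eq_zero_or_pos m with rfl | hm0
          · simp
          · rw [if_neg (by omega)]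
            have hcm : q.coeff m = 0 := by
              conv_lhs => rw [hq']
              rw [Polynomial.coeff_C, if_neg (by omega)]
            rw [hcm]; ring
      | succ d ih =>
        intro q hq m
        by_cases hqd : q.natDegree ≤ d
        · exact ih q hqd m
        have hdeg : q.natDegree = d + 1 := le_antisymm hq (by omega)
        set c := q.coeff (d+1) with hc
        set r' := q - Polynomial.C c * P (d+1) with hr'
        have hqr : ∀ y : ℝ, q.eval y = c * (P (d+1)).eval y + r'.eval y := by
          intro y; rw [hr']; simp only [Polynomial.eval_sub, Polynomial.eval_mul, Polynomial.eval_C]; ring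
        have hrdeg : r'.natDegree ≤ d := by
          apply Polynomial.natDegree_le_iff_coeff_eq_zero.mpr
          intro N hN
          rw [hr', Polynomial.coeff_sub, Polynomial.coeff_C_mul]
          rcases eq_or_lt_of_le (Nat.succ_le_of_lt hN) with hN1 | hN1
          · rw [← hN1, hcoeffP (d+1), ← hc]; ring
          · rw [hcoeffP' (d+1) N hN1,
              Polynomial.coeff_eq_zero_of_natDegree_lt (by omega)]; ring
        obtain ⟨hrint, hrval⟩ := ih r' hrdeg m
        have hfe : (fun y => q.eval y * (P m).eval y * w y)
            = fun y => c * ((P (d+1)).eval y * (P m).eval y * w y)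
              + r'.eval y * (P m).eval y * w y := by
          funext y; rw [hqr]; ring
        constructor
        · rw [hfe]; exact ((hii (d+1) m).const_mul c).add hrint
        · intro hm
          rw [hdeg] at hm
          rw [hfe, intervalIntegral.integral_add ((hii (d+1) m).const_mul c) hrint,
            intervalIntegral.integral_const_mul, horth (d+1) m,
            hrval (le_trans hrdeg (by omega))]
          have hrcm : r'.coeff m = q.coeff m - c * (P (d+1)).coeff m := by
            rw [hr']; simp
          by_cases hmd : d + 1 = m
          · rw [if_pos hmd, hrcm, ← hmd, hcoeffP (d+1), ← hc]; ring
          · rw [if_neg hmd, hrcm, hcoeffP' (d+1) m (by omega)]; ring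
    intro q m
    exact main q.natDegree q le_rfl m
  -- integrability of q * w / y and q * w / (1-y)
  have hCy : ∀ q : Polynomial ℝ,
      IntervalIntegrable (fun y => q.eval y * w y / y) volume 0 1 := by
    intro q
    obtain ⟨C, hC⟩ : ∃ C, ∀ y ∈ Set.Icc (0:ℝ) 1, ‖q.eval y * (y - t) ^ γ‖ ≤ C := by
      apply IsCompact.exists_bound_of_continuousOn isCompact_Icc
      apply ContinuousOn.mul (Polynomial.continuous q).continuousOn
      apply ContinuousOn.rpow_const ((continuous_id.sub continuous_const).continuousOn)
      intro y hy
      exact Or.inl (by simp; linarith [hy.1])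
    have hgint : IntervalIntegrable (fun y : ℝ => |C| * y ^ (α - 1)) volume 0 1 :=
      (intervalIntegral.intervalIntegrable_rpow' (by linarith)).const_mul _
    apply hgint.mono_fun'
    · exact (((hpmeas q).mul hwmeas).div measurable_id).aestronglyMeasurable
    · filter_upwards [ae_restrict_mem measurableSet_uIoc] with y hy
      rw [huIoc] at hy
      have hy0 : 0 < y := hy.1
      have hy1 : y ≤ 1 := hy.2
      have he : q.eval y * w y / y
          = q.eval y * (y - t) ^ γ * (1 - y) ^ β * y ^ (α - 1) := by
        rw [hwdef]; unfold genJacobiWeight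
        rw [Real.rpow_sub hy0, Real.rpow_one]
        ring
      rw [he, Real.norm_eq_abs, abs_mul, abs_mul]
      have h1 : |(1 - y) ^ β| ≤ 1 := by
        rw [abs_of_nonneg (Real.rpow_nonneg (by linarith) _)]
        exact Real.rpow_le_one (by linarith) (by linarith) hβ.le
      have h2 : |y ^ (α - 1)| = y ^ (α - 1) := abs_of_nonneg (Real.rpow_nonneg hy0.le _)
      have h3 : |q.eval y * (y - t) ^ γ| ≤ |C| :=
        le_trans (hC y (Set.mem_Icc.mpr ⟨hy0.le, hy1⟩)) (le_abs_self C)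
      rw [h2]
      calc |q.eval y * (y - t) ^ γ| * |(1 - y) ^ β| * y ^ (α - 1)
          ≤ |C| * 1 * y ^ (α - 1) := by
            apply mul_le_mul_of_nonneg_right _ (Real.rpow_nonneg hy0.le _)
            exact mul_le_mul h3 h1 (abs_nonneg _) (abs_nonneg _)
        _ = |C| * y ^ (α - 1) := by ring
  have hCy' : ∀ q : Polynomial ℝ,
      IntervalIntegrable (fun y => q.eval y * w y / (1 - y)) volume 0 1 := by
    intro q
    obtain ⟨C, hC⟩ : ∃ C, ∀ y ∈ Set.Icc (0:ℝ) 1, ‖q.eval y * (y - t) ^ γ‖ ≤ C := by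
      apply IsCompact.exists_bound_of_continuousOn isCompact_Icc
      apply ContinuousOn.mul (Polynomial.continuous q).continuousOn
      apply ContinuousOn.rpow_const ((continuous_id.sub continuous_const).continuousOn)
      intro y hy
      exact Or.inl (by simp; linarith [hy.1])
    have hgint : IntervalIntegrable (fun y : ℝ => |C| * (1 - y) ^ (β - 1)) volume 0 1 := by
      have h1 : IntervalIntegrable (fun x : ℝ => (1 - x) ^ (β - 1)) volume (1-0) (1-1) :=
        (intervalIntegral.intervalIntegrable_rpow' (by linarith)).comp_sub_left 1
      norm_num at h1
      exact h1.symm.const_mul _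
    apply hgint.mono_fun'
    · exact (((hpmeas q).mul hwmeas).div ((measurable_const.sub measurable_id))).aestronglyMeasurable
    · filter_upwards [ae_restrict_mem measurableSet_uIoc] with y hy
      rw [huIoc] at hy
      have hy0 : 0 < y := hy.1
      have hy1 : y ≤ 1 := hy.2
      rcases eq_or_lt_of_le hy1 with rfl | hy1'
      · have : (1:ℝ).rpow = fun _ => (1:ℝ) := by ext z; simp [Real.rpow_def_of_pos]
        rw [hw1]
        simp only [mul_zero, zero_div, norm_zero]
        positivity
      · have he : q.eval y * w y / (1 - y)
            = q.eval y * (y - t) ^ γ * y ^ α * (1 - y) ^ (β - 1) := by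
          rw [hwdef]; unfold genJacobiWeight
          rw [Real.rpow_sub (by linarith : (0:ℝ) < 1 - y), Real.rpow_one]
          ring
        rw [he, Real.norm_eq_abs, abs_mul, abs_mul]
        have h1 : |y ^ α| ≤ 1 := by
          rw [abs_of_nonneg (Real.rpow_nonneg hy0.le _)]
          exact Real.rpow_le_one hy0.le hy1 hα.le
        have h2 : |(1 - y) ^ (β - 1)| = (1 - y) ^ (β - 1) :=
          abs_of_nonneg (Real.rpow_nonneg (by linarith) _)
        have h3 : |q.eval y * (y - t) ^ γ| ≤ |C| :=
          le_trans (hC y (Set.mem_Icc.mpr ⟨hy0.le, hy1⟩)) (le_abs_self C)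
        rw [h2]
        calc |q.eval y * (y - t) ^ γ| * |y ^ α| * (1 - y) ^ (β - 1)
            ≤ |C| * 1 * (1 - y) ^ (β - 1) := by
              apply mul_le_mul_of_nonneg_right _ (Real.rpow_nonneg (by linarith) _)
              exact mul_le_mul h3 h1 (abs_nonneg _) (abs_nonneg _)
          _ = |C| * (1 - y) ^ (β - 1) := by ring
  set Kk : ℕ → ℝ := fun n => ∫ y in (0:ℝ)..1, (P n).eval y * w y / y with hKk
  set Ll : ℕ → ℝ := fun n => ∫ y in (0:ℝ)..1, (P n).eval y * w y / (1 - y) with hLl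
  have hne1' : ∀ᵐ (y : ℝ), y ≠ (1:ℝ) := by
    rw [MeasureTheory.ae_iff]
    simp only [ne_eq, not_not, Set.setOf_eq_eq_singleton]
    exact Real.volume_singleton
  -- splitting lemma at 0
  have split0 : ∀ k m : ℕ, k ≤ m →
      (∫ y in (0:ℝ)..1, (P m).eval y * (P (k+1)).eval y * w y / y)
        = (P (k+1)).eval 0 * Kk m + (if m = k then (1:ℝ) else 0) * h m := by
    intro k m hkm
    set Q := P (k+1) /ₘ Polynomial.X with hQ
    have hsum : Polynomial.C ((P (k+1)).eval 0) + Polynomial.X * Q = P (k+1) := by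
      have := Polynomial.modByMonic_add_div (P (k+1)) Polynomial.X
      rwa [Polynomial.modByMonic_X] at this
    have hQdeg : Q.natDegree = k := by
      rw [hQ, Polynomial.natDegree_divByMonic _ Polynomial.monic_X,
        (hmonic (k+1)).2, Polynomial.natDegree_X]
      omega
    have hQcoeff : ∀ j, Q.coeff j = (P (k+1)).coeff (j+1) := by
      intro j
      conv_rhs => rw [← hsum]
      rw [Polynomial.coeff_add, Polynomial.coeff_C, if_neg (Nat.succ_ne_zero j),
        Polynomial.coeff_X_mul]
      ring
    have heval : ∀ y : ℝ, (P (k+1)).eval y = (P (k+1)).eval 0 + y * Q.eval y := by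
      intro y; conv_lhs => rw [← hsum]
      simp
    have e : (∫ y in (0:ℝ)..1, (P m).eval y * (P (k+1)).eval y * w y / y)
        = ∫ y in (0:ℝ)..1,
            ((P (k+1)).eval 0 * ((P m).eval y * w y / y) + Q.eval y * (P m).eval y * w y) := by
      apply intervalIntegral.integral_congr
      intro y _
      dsimp only
      by_cases hy0 : y = 0
      · subst hy0; simp [hw0]
      · rw [heval y]
        field_simp
    rw [e, intervalIntegral.integral_add ((hCy (P m)).const_mul _) (keyB Q m).1,
      intervalIntegral.integral_const_mul, (keyB Q m).2 (by omega), hQcoeff m]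
    congr 2
    by_cases hmk : m = k
    · subst hmk; rw [if_pos rfl, hcoeffP (m+1)]
    · rw [if_neg hmk, hcoeffP' (k+1) (m+1) (by omega)]
  -- splitting lemma at 1
  have split1 : ∀ k m : ℕ, k ≤ m →
      (∫ y in (0:ℝ)..1, (P m).eval y * (P (k+1)).eval y * w y / (1 - y))
        = (P (k+1)).eval 1 * Ll m - (if m = k then (1:ℝ) else 0) * h m := by
    intro k m hkm
    set Q := P (k+1) /ₘ (Polynomial.X - Polynomial.C 1) with hQ
    have hsum : Polynomial.C ((P (k+1)).eval 1) + (Polynomial.X - Polynomial.C 1) * Q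
        = P (k+1) := by
      have := Polynomial.modByMonic_add_div (P (k+1)) (Polynomial.X - Polynomial.C (1:ℝ))
      rwa [Polynomial.modByMonic_X_sub_C_eq_C_eval] at this
    have hQdeg : Q.natDegree = k := by
      rw [hQ, Polynomial.natDegree_divByMonic _ (Polynomial.monic_X_sub_C (1:ℝ)),
        (hmonic (k+1)).2, Polynomial.natDegree_X_sub_C]
      omega
    have hQcoeff : ∀ j, Q.coeff j = (P (k+1)).coeff (j+1) + Q.coeff (j+1) := by
      intro j
      conv_rhs => rw [← hsum]
      rw [Polynomial.coeff_add, Polynomial.coeff_C, if_neg (Nat.succ_ne_zero j), sub_mul,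
        Polynomial.coeff_sub, Polynomial.coeff_X_mul, Polynomial.coeff_C_mul]
      ring
    have hQcm : Q.coeff m = if m = k then (1:ℝ) else 0 := by
      by_cases hmk : m = k
      · subst hmk
        rw [if_pos rfl, hQcoeff m, hcoeffP (m+1),
          Polynomial.coeff_eq_zero_of_natDegree_lt (by omega)]
        ring
      · rw [if_neg hmk, Polynomial.coeff_eq_zero_of_natDegree_lt (by omega)]
    have heval : ∀ y : ℝ, (P (k+1)).eval y = (P (k+1)).eval 1 + (y - 1) * Q.eval y := by
      intro y; conv_lhs => rw [← hsum]
      simp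
    have e : (∫ y in (0:ℝ)..1, (P m).eval y * (P (k+1)).eval y * w y / (1 - y))
        = ∫ y in (0:ℝ)..1,
            ((P (k+1)).eval 1 * ((P m).eval y * w y / (1 - y))
              - Q.eval y * (P m).eval y * w y) := by
      apply intervalIntegral.integral_congr_ae
      filter_upwards [hne1'] with y hy1 _
      rw [heval y]
      have hne : (1:ℝ) - y ≠ 0 := fun hc => hy1 (by linarith)
      field_simp
      ring
    rw [e, intervalIntegral.integral_sub ((hCy' (P m)).const_mul _) (keyB Q m).1,
      intervalIntegral.integral_const_mul, (keyB Q m).2 (by omega), hQcm]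
  -- value computations
  have hRsval : ∀ n, (∫ y in (0:ℝ)..1, ((P n).eval y)^2 * w y / y)
      = (P n).eval 0 * Kk n := by
    intro n
    have hsq : (∫ y in (0:ℝ)..1, ((P n).eval y)^2 * w y / y)
        = ∫ y in (0:ℝ)..1, (P n).eval y * (P n).eval y * w y / y := by
      apply intervalIntegral.integral_congr
      intro y _
      dsimp only
      rw [pow_two]
    cases n with
    | zero =>
      rw [hsq]
      have e : (∫ y in (0:ℝ)..1, (P 0).eval y * (P 0).eval y * w y / y) = Kk 0 := by
        simp only [hKk]
        apply intervalIntegral.integral_congr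
        intro y _
        rw [hP0]; simp
      rw [e, hP0]; simp
    | succ k =>
      rw [hsq, split0 k (k+1) (by omega), if_neg (by omega)]; ring
  have hrsKval : ∀ k : ℕ, (∫ y in (0:ℝ)..1, (P k).eval y * (P (k+1)).eval y * w y / y)
      = (P (k+1)).eval 0 * Kk k + h k := by
    intro k
    have e := split0 k k le_rfl
    rw [if_pos rfl] at e
    rw [e]; ring
  have hRval : ∀ n, (∫ y in (0:ℝ)..1, ((P n).eval y)^2 * w y / (1 - y))
      = (P n).eval 1 * Ll n := by
    intro n
    have hsq : (∫ y in (0:ℝ)..1, ((P n).eval y)^2 * w y / (1 - y))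
        = ∫ y in (0:ℝ)..1, (P n).eval y * (P n).eval y * w y / (1 - y) := by
      apply intervalIntegral.integral_congr
      intro y _
      dsimp only
      rw [pow_two]
    cases n with
    | zero =>
      rw [hsq]
      have e : (∫ y in (0:ℝ)..1, (P 0).eval y * (P 0).eval y * w y / (1 - y)) = Ll 0 := by
        simp only [hLl]
        apply intervalIntegral.integral_congr
        intro y _
        rw [hP0]; simp
      rw [e, hP0]; simp
    | succ k =>
      rw [hsq, split1 k (k+1) (by omega), if_neg (by omega)]; ring
  have hrLval : ∀ k : ℕ, (∫ y in (0:ℝ)..1, (P k).eval y * (P (k+1)).eval y * w y / (1 - y))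
      = (P (k+1)).eval 1 * Ll k - h k := by
    intro k
    have e := split1 k k le_rfl
    rw [if_pos rfl] at e
    rw [e]; ring
  -- base relations
  have hK1 : Kk 1 = (P 1).eval 0 * Kk 0 + h 0 := by
    have e : Kk 1 = ∫ y in (0:ℝ)..1, (P 0).eval y * (P 1).eval y * w y / y := by
      simp only [hKk]
      apply intervalIntegral.integral_congr
      intro y _
      rw [hP0]; simp
    rw [e]; exact hrsKval 0
  have hL1 : Ll 1 = (P 1).eval 1 * Ll 0 - h 0 := by
    have e : Ll 1 = ∫ y in (0:ℝ)..1, (P 0).eval y * (P 1).eval y * w y / (1 - y) := by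
      simp only [hLl]
      apply intervalIntegral.integral_congr
      intro y _
      rw [hP0]; simp
    rw [e]; exact hrLval 0
  -- recurrences for Kk and Ll
  have hKrec : ∀ k, Kk (k+2) + a (k+1) * Kk (k+1) + b (k+1) * Kk k = 0 := by
    intro k
    have h0 : (∫ y in (0:ℝ)..1, (P 0).eval y * (P (k+1)).eval y * w y) = 0 := by
      rw [horth 0 (k+1), if_neg (by omega)]
    have e : (∫ y in (0:ℝ)..1, (P 0).eval y * (P (k+1)).eval y * w y)
        = ∫ y in (0:ℝ)..1, ((P (k+2)).eval y * w y / y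
            + (a (k+1) * ((P (k+1)).eval y * w y / y)
              + b (k+1) * ((P k).eval y * w y / y))) := by
      apply intervalIntegral.integral_congr
      intro y _
      dsimp only
      by_cases hy0 : y = 0
      · subst hy0; simp [hw0]
      · have hr1 := hrec (k+1) y
        rw [Nat.add_sub_cancel] at hr1
        rw [hP0]
        simp only [Polynomial.eval_one, one_mul]
        field_simp
        linear_combination w y * hr1
    rw [e, intervalIntegral.integral_add (hCy (P (k+2)))
        (((hCy (P (k+1))).const_mul _).add ((hCy (P k)).const_mul _)),
      intervalIntegral.integral_add ((hCy (P (k+1))).const_mul _) ((hCy (P k)).const_mul _),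
      intervalIntegral.integral_const_mul, intervalIntegral.integral_const_mul] at h0
    simp only [hKk]
    linarith [h0]
  have hLrec : ∀ k, Ll (k+2) + a (k+1) * Ll (k+1) + b (k+1) * Ll k = Ll (k+1) := by
    intro k
    have h0 : (∫ y in (0:ℝ)..1, (P 0).eval y * (P (k+1)).eval y * w y) = 0 := by
      rw [horth 0 (k+1), if_neg (by omega)]
    have e : (∫ y in (0:ℝ)..1, ((P (k+2)).eval y * w y / (1 - y)
          + (a (k+1) * ((P (k+1)).eval y * w y / (1 - y))
            + b (k+1) * ((P k).eval y * w y / (1 - y)))))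
        = ∫ y in (0:ℝ)..1, ((P (k+1)).eval y * w y / (1 - y)
            - (P 0).eval y * (P (k+1)).eval y * w y) := by
      apply intervalIntegral.integral_congr_ae
      filter_upwards [hne1'] with y hy1 _
      have hr1 := hrec (k+1) y
      rw [Nat.add_sub_cancel] at hr1
      have hne : (1:ℝ) - y ≠ 0 := fun hc => hy1 (by linarith)
      rw [hP0]
      simp only [Polynomial.eval_one, one_mul]
      field_simp
      linear_combination (-(w y)) * hr1
    rw [intervalIntegral.integral_add (hCy' (P (k+2)))
        (((hCy' (P (k+1))).const_mul _).add ((hCy' (P k)).const_mul _)),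
      intervalIntegral.integral_add ((hCy' (P (k+1))).const_mul _) ((hCy' (P k)).const_mul _),
      intervalIntegral.integral_const_mul, intervalIntegral.integral_const_mul,
      intervalIntegral.integral_sub (hCy' (P (k+1))) (hii 0 (k+1)), h0] at e
    simp only [hLl]
    linarith [e]
  -- norm relation h (k+1) = b (k+1) * h k
  have hh : ∀ k, h (k+1) = b (k+1) * h k := by
    intro k
    have e : (∫ y in (0:ℝ)..1, ((P (k+1)).eval y * (P (k+1)).eval y * w y
          + (a k * ((P k).eval y * (P (k+1)).eval y * w y)
            + b k * ((P (k-1)).eval y * (P (k+1)).eval y * w y))))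
        = ∫ y in (0:ℝ)..1, ((P (k+2)).eval y * (P k).eval y * w y
          + (a (k+1) * ((P (k+1)).eval y * (P k).eval y * w y)
            + b (k+1) * ((P k).eval y * (P k).eval y * w y))) := by
      apply intervalIntegral.integral_congr
      intro y _
      dsimp only
      have hr1 := hrec k y
      have hr2 := hrec (k+1) y
      rw [Nat.add_sub_cancel] at hr2
      linear_combination ((P k).eval y * w y) * hr2 - ((P (k+1)).eval y * w y) * hr1
    rw [intervalIntegral.integral_add (hii (k+1) (k+1))
        (((hii k (k+1)).const_mul _).add ((hii (k-1) (k+1)).const_mul _)),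
      intervalIntegral.integral_add ((hii k (k+1)).const_mul _) ((hii (k-1) (k+1)).const_mul _),
      intervalIntegral.integral_const_mul, intervalIntegral.integral_const_mul,
      intervalIntegral.integral_add (hii (k+2) k)
        (((hii (k+1) k).const_mul _).add ((hii k k).const_mul _)),
      intervalIntegral.integral_add ((hii (k+1) k).const_mul _) ((hii k k).const_mul _),
      intervalIntegral.integral_const_mul, intervalIntegral.integral_const_mul,
      horth (k+1) (k+1), horth k (k+1), horth (k-1) (k+1),
      horth (k+2) k, horth (k+1) k, horth k k,
      if_pos rfl, if_neg (show ¬k = k+1 by omega), if_neg (show ¬k-1 = k+1 by omega),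
      if_neg (show ¬k+2 = k by omega), if_neg (show ¬k+1 = k by omega), if_pos rfl] at e
    linarith [e]
  -- the Casoratian identities
  have hcas : ∀ k : ℕ,
      ((P k).eval 0 * Kk (k+1) - (P (k+1)).eval 0 * Kk k = h k)
      ∧ ((P k).eval 1 * Ll (k+1) - (P (k+1)).eval 1 * Ll k = -h k) := by
    intro k
    induction k with
    | zero =>
      constructor
      · rw [hP0]
        simp only [Polynomial.eval_one, one_mul]
        rw [hK1]; ring
      · rw [hP0]
        simp only [Polynomial.eval_one, one_mul]
        rw [hL1]; ring
    | succ k ih =>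
      have e2 := hrec (k+1) (0:ℝ)
      rw [Nat.add_sub_cancel] at e2
      have e2' := hrec (k+1) (1:ℝ)
      rw [Nat.add_sub_cancel] at e2'
      constructor
      · linear_combination (P (k+1)).eval 0 * hKrec k + Kk (k+1) * e2
          + b (k+1) * ih.1 - hh k
      · linear_combination (P (k+1)).eval 1 * hLrec k + Ll (k+1) * e2'
          + b (k+1) * ih.2 + hh k
  -- the final computation
  intro n hn
  obtain ⟨k, rfl⟩ : ∃ k, n = k + 1 := ⟨n - 1, by omega⟩
  have hHk : h k ≠ 0 := (hpos k).ne'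
  have hbH : 0 < b (k+1) * h k := by rw [← hh k]; exact hpos (k+1)
  have hbne : b (k+1) ≠ 0 := by
    intro hc; rw [hc, zero_mul] at hbH; exact lt_irrefl 0 hbH
  have ers : rs (k+1) = α / h k * ((P (k+1)).eval 0 * Kk k + h k) := by
    rw [hrs (k+1) (by omega)]
    simp only [Nat.add_sub_cancel]
    rw [hrsKval k]
  have eRs1 : Rs (k+1) = α / (b (k+1) * h k) * ((P (k+1)).eval 0 * Kk (k+1)) := by
    rw [hRs (k+1), hRsval (k+1), hh k]
  have eRs0 : Rs k = α / h k * ((P k).eval 0 * Kk k) := by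
    rw [hRs k, hRsval k]
  have er : r (k+1) = β / h k * ((P (k+1)).eval 1 * Ll k - h k) := by
    rw [hr (k+1) (by omega)]
    simp only [Nat.add_sub_cancel]
    rw [hrLval k]
  have eR1 : R (k+1) = β / (b (k+1) * h k) * ((P (k+1)).eval 1 * Ll (k+1)) := by
    rw [hR (k+1), hRval (k+1), hh k]
  have eR0 : R k = β / h k * ((P k).eval 1 * Ll k) := by
    rw [hR k, hRval k]
  have hcK := (hcas k).1
  have hcL := (hcas k).2
  clear_value w Kk Ll
  clear hwdef hKk hLl horth hrec hR hRs hr hrs hwmeas huIoc hw0 hw1 hwnn hP0 hcoeffP hcoeffP'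
    hpmeas hself hii keyB hCy hCy' hne1' split0 split1 hRsval hrsKval hRval hrLval hK1 hL1
    hKrec hLrec hcas hmonic
  simp only [Nat.add_sub_cancel]
  constructor
  · rw [ers, eRs1, eRs0]
    field_simp
    linear_combination (-((P (k+1)).eval 0 * Kk k)) * hcK
  · rw [er, eR1, eR0]
    field_simp
    linear_combination (-((P (k+1)).eval 1 * Ll k)) * hcL
end

section
/- For every n ≥ 0 the recurrence coefficient α_n satisfies α_n = t(r*_{n+1} − r*_n) − (t−1)(r_{n+1} − r_n) + t, and consequently the subleading coefficient of P_n satisfies p₁(n) = (t−1)r_n − t r*_n − nt for every n ≥ 0. -/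
open MeasureTheory Real

namespace GJWAux

open Polynomial intervalIntegral Set Filter

variable {α β γ t : ℝ}

lemma cont_rpow {q : ℝ} (hq : 0 ≤ q) : Continuous fun x : ℝ => x ^ q :=
  continuous_iff_continuousAt.2 fun x => Real.continuousAt_rpow_const x q (Or.inr hq)

lemma contAt_aux (ht : t < 0) {a b : ℝ} (ha : 0 ≤ a) (hb : 0 ≤ b) (c : ℝ) {f : ℝ → ℝ}
    (hf : Continuous f) {x : ℝ} (hx : x ∈ Icc (0:ℝ) 1) :
    ContinuousAt (fun x => f x * ((x - t) ^ c * x ^ a * (1 - x) ^ b)) x := by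
  have hxt : x - t ≠ 0 := by have := hx.1; intro hc; linarith
  have h1 : ContinuousAt (fun x : ℝ => (x - t) ^ c) x :=
    ((continuous_id.sub continuous_const).continuousAt).rpow_const (Or.inl hxt)
  have h2 : ContinuousAt (fun x : ℝ => x ^ a) x := (cont_rpow ha).continuousAt
  have h3 : ContinuousAt (fun x : ℝ => (1 - x) ^ b) x :=
    ((cont_rpow hb).comp (continuous_const.sub continuous_id)).continuousAt
  exact hf.continuousAt.mul ((h1.mul h2).mul h3)

lemma II_aux (ht : t < 0) {a b : ℝ} (ha : 0 ≤ a) (hb : 0 ≤ b) (c : ℝ) {f : ℝ → ℝ}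
    (hf : Continuous f) :
    IntervalIntegrable (fun x => f x * ((x - t) ^ c * x ^ a * (1 - x) ^ b)) volume 0 1 := by
  apply ContinuousOn.intervalIntegrable
  rw [uIcc_of_le (by norm_num : (0:ℝ) ≤ 1)]
  exact fun x hx => (contAt_aux ht ha hb c hf hx).continuousWithinAt

lemma II_w (ht : t < 0) (hα : 0 ≤ α) (hβ : 0 ≤ β) {f : ℝ → ℝ} (hf : Continuous f) :
    IntervalIntegrable (fun x => f x * genJacobiWeight α β γ t x) volume 0 1 := by
  have := II_aux ht hα hβ γ hf
  simpa [genJacobiWeight] using this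

lemma II_g2 (ht : t < 0) (hα : 0 < α) (hβ : 0 ≤ β) {f : ℝ → ℝ} (hf : Continuous f) :
    IntervalIntegrable (fun x => f x * ((x - t) ^ γ * x ^ (α - 1) * (1 - x) ^ β)) volume 0 1 := by
  have base : IntervalIntegrable (fun x : ℝ => x ^ (α - 1)) volume 0 1 :=
    intervalIntegrable_rpow' (by linarith)
  have hcont : ContinuousOn (fun x => f x * ((x - t) ^ γ * (1 - x) ^ β)) (Set.uIcc (0:ℝ) 1) := by
    rw [uIcc_of_le (by norm_num : (0:ℝ) ≤ 1)]
    intro x hx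
    have hxt : x - t ≠ 0 := by have := hx.1; intro hc; linarith
    have h1 : ContinuousAt (fun x : ℝ => (x - t) ^ γ) x :=
      ((continuous_id.sub continuous_const).continuousAt).rpow_const (Or.inl hxt)
    have h3 : ContinuousAt (fun x : ℝ => (1 - x) ^ β) x :=
      ((cont_rpow hβ).comp (continuous_const.sub continuous_id)).continuousAt
    exact (hf.continuousAt.mul (h1.mul h3)).continuousWithinAt
  have := base.continuousOn_mul hcont
  have heq : (fun x => f x * ((x - t) ^ γ * x ^ (α - 1) * (1 - x) ^ β))
      = fun x => (f x * ((x - t) ^ γ * (1 - x) ^ β)) * x ^ (α - 1) := by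
    funext x; ring
  rw [heq]; exact this

lemma II_g3 (ht : t < 0) (hα : 0 ≤ α) (hβ : 0 < β) {f : ℝ → ℝ} (hf : Continuous f) :
    IntervalIntegrable (fun x => f x * ((x - t) ^ γ * x ^ α * (1 - x) ^ (β - 1))) volume 0 1 := by
  have base0 : IntervalIntegrable (fun x : ℝ => x ^ (β - 1)) volume 0 1 :=
    intervalIntegrable_rpow' (by linarith)
  have base : IntervalIntegrable (fun x : ℝ => (1 - x) ^ (β - 1)) volume 0 1 := by
    have := base0.comp_sub_left 1
    simpa using this.symm
  have hcont : ContinuousOn (fun x => f x * ((x - t) ^ γ * x ^ α)) (Set.uIcc (0:ℝ) 1) := by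
    rw [uIcc_of_le (by norm_num : (0:ℝ) ≤ 1)]
    intro x hx
    have hxt : x - t ≠ 0 := by have := hx.1; intro hc; linarith
    have h1 : ContinuousAt (fun x : ℝ => (x - t) ^ γ) x :=
      ((continuous_id.sub continuous_const).continuousAt).rpow_const (Or.inl hxt)
    have h2 : ContinuousAt (fun x : ℝ => x ^ α) x := (cont_rpow hα).continuousAt
    exact (hf.continuousAt.mul (h1.mul h2)).continuousWithinAt
  have := base.continuousOn_mul hcont
  have heq : (fun x => f x * ((x - t) ^ γ * x ^ α * (1 - x) ^ (β - 1)))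
      = fun x => (f x * ((x - t) ^ γ * x ^ α)) * (1 - x) ^ (β - 1) := by
    funext x; ring
  rw [heq]; exact this

lemma parts (hα : 0 < α) (hβ : 0 < β) (ht : t < 0) (Q : Polynomial ℝ) :
    (∫ x in (0:ℝ)..1, (derivative Q).eval x * genJacobiWeight α β γ t x)
      + γ * (∫ x in (0:ℝ)..1, Q.eval x * ((x - t) ^ (γ - 1) * x ^ α * (1 - x) ^ β))
      + α * (∫ x in (0:ℝ)..1, Q.eval x * ((x - t) ^ γ * x ^ (α - 1) * (1 - x) ^ β))
      - β * (∫ x in (0:ℝ)..1, Q.eval x * ((x - t) ^ γ * x ^ α * (1 - x) ^ (β - 1))) = 0 := by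
  have i1 : IntervalIntegrable (fun x => (derivative Q).eval x * genJacobiWeight α β γ t x)
      volume 0 1 := II_w ht hα.le hβ.le (derivative Q).continuous
  have i2 : IntervalIntegrable (fun x => Q.eval x * ((x - t) ^ (γ - 1) * x ^ α * (1 - x) ^ β))
      volume 0 1 := II_aux ht hα.le hβ.le (γ - 1) Q.continuous
  have i3 : IntervalIntegrable (fun x => Q.eval x * ((x - t) ^ γ * x ^ (α - 1) * (1 - x) ^ β))
      volume 0 1 := II_g2 ht hα hβ.le Q.continuous
  have i4 : IntervalIntegrable (fun x => Q.eval x * ((x - t) ^ γ * x ^ α * (1 - x) ^ (β - 1)))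
      volume 0 1 := II_g3 ht hα.le hβ Q.continuous
  set F' : ℝ → ℝ := fun x => (derivative Q).eval x * genJacobiWeight α β γ t x
      + ((γ * (Q.eval x * ((x - t) ^ (γ - 1) * x ^ α * (1 - x) ^ β))
        + α * (Q.eval x * ((x - t) ^ γ * x ^ (α - 1) * (1 - x) ^ β)))
        - β * (Q.eval x * ((x - t) ^ γ * x ^ α * (1 - x) ^ (β - 1)))) with hF'
  have hint : IntervalIntegrable F' volume 0 1 :=
    i1.add (((i2.const_mul γ).add (i3.const_mul α)).sub (i4.const_mul β))
  have hderiv : ∀ x ∈ Set.Ioo (0:ℝ) 1,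
      HasDerivAt (fun y => Q.eval y * genJacobiWeight α β γ t y) (F' x) x := by
    intro x hx
    obtain ⟨hx0, hx1⟩ := hx
    have hxt : (0:ℝ) < x - t := by linarith
    have hu : HasDerivAt (fun y : ℝ => (y - t) ^ γ) (1 * γ * (x - t) ^ (γ - 1)) x := by
      have := ((hasDerivAt_id x).sub_const t).rpow_const
        (p := γ) (Or.inl (show id x - t ≠ 0 from hxt.ne'))
      simpa using this
    have hv : HasDerivAt (fun y : ℝ => y ^ α) (1 * α * x ^ (α - 1)) x := by
      have := (hasDerivAt_id x).rpow_const (p := α) (Or.inl (show id x ≠ 0 from hx0.ne'))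
      simpa using this
    have hs : HasDerivAt (fun y : ℝ => (1 - y) ^ β) ((-1) * β * (1 - x) ^ (β - 1)) x := by
      have h1x : (1:ℝ) - x ≠ 0 := by intro hc; linarith
      have := ((hasDerivAt_id x).const_sub 1).rpow_const (p := β) (Or.inl h1x)
      simpa using this
    have hQ := Q.hasDerivAt x
    have hmul := hQ.mul ((hu.mul hv).mul hs)
    have : F' x = (derivative Q).eval x * ((x - t) ^ γ * x ^ α * (1 - x) ^ β)
        + Q.eval x * ((1 * γ * (x - t) ^ (γ - 1) * x ^ α + (x - t) ^ γ * (1 * α * x ^ (α - 1)))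
            * (1 - x) ^ β + (x - t) ^ γ * x ^ α * ((-1) * β * (1 - x) ^ (β - 1))) := by
      rw [hF']; simp only [genJacobiWeight]; ring
    rw [this]
    simp only [genJacobiWeight]
    exact hmul
  have h0 : Filter.Tendsto (fun y => Q.eval y * genJacobiWeight α β γ t y)
      (nhdsWithin 0 (Set.Ioi 0)) (nhds 0) := by
    have hc : ContinuousAt (fun y => Q.eval y * genJacobiWeight α β γ t y) 0 := by
      have := contAt_aux ht hα.le hβ.le γ Q.continuous
        (x := 0) (by constructor <;> norm_num)
      simpa [genJacobiWeight] using this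
    have hval : Q.eval 0 * genJacobiWeight α β γ t 0 = 0 := by
      simp [genJacobiWeight, Real.zero_rpow hα.ne']
    have := hc.tendsto.mono_left (nhdsWithin_le_nhds (s := Set.Ioi (0:ℝ)))
    rwa [hval] at this
  have h1 : Filter.Tendsto (fun y => Q.eval y * genJacobiWeight α β γ t y)
      (nhdsWithin 1 (Set.Iio 1)) (nhds 0) := by
    have hc : ContinuousAt (fun y => Q.eval y * genJacobiWeight α β γ t y) 1 := by
      have := contAt_aux ht hα.le hβ.le γ Q.continuous
        (x := 1) (by constructor <;> norm_num)
      simpa [genJacobiWeight] using this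
    have hval : Q.eval 1 * genJacobiWeight α β γ t 1 = 0 := by
      simp [genJacobiWeight, Real.zero_rpow hβ.ne']
    have := hc.tendsto.mono_left (nhdsWithin_le_nhds (s := Set.Iio (1:ℝ)))
    rwa [hval] at this
  have key := intervalIntegral.integral_eq_sub_of_hasDerivAt_of_tendsto
    (by norm_num : (0:ℝ) < 1) hderiv hint h0 h1
  rw [hF'] at key
  rw [intervalIntegral.integral_add i1
      (((i2.const_mul γ).add (i3.const_mul α)).sub (i4.const_mul β)),
    intervalIntegral.integral_sub ((i2.const_mul γ).add (i3.const_mul α)) (i4.const_mul β),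
    intervalIntegral.integral_add (i2.const_mul γ) (i3.const_mul α),
    intervalIntegral.integral_const_mul, intervalIntegral.integral_const_mul,
    intervalIntegral.integral_const_mul] at key
  linarith [key]

lemma II3 (ht : t < 0) (hα : 0 < α) (hβ : 0 < β) (p q : Polynomial ℝ) :
    IntervalIntegrable
      (fun x => p.eval x * q.eval x * genJacobiWeight α β γ t x) volume 0 1 := by
  have := II_w (γ := γ) ht hα.le hβ.le (p.continuous.mul q.continuous)
  simpa [mul_assoc] using this

lemma expand (hα : 0 < α) (hβ : 0 < β) (ht : t < 0)
    (P : ℕ → Polynomial ℝ) (h : ℕ → ℝ)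
    (hmonic : ∀ n, (P n).Monic ∧ (P n).natDegree = n)
    (horth : ∀ m n, (∫ x in (0:ℝ)..1,
        (P m).eval x * (P n).eval x * genJacobiWeight α β γ t x)
      = if m = n then h n else 0) :
    ∀ d (Q : Polynomial ℝ), Q.natDegree ≤ d → ∀ m, d ≤ m →
      (∫ x in (0:ℝ)..1, Q.eval x * (P m).eval x * genJacobiWeight α β γ t x)
        = Q.coeff m * h m := by
  have II3 : ∀ p q : Polynomial ℝ, IntervalIntegrable
      (fun x => p.eval x * q.eval x * genJacobiWeight α β γ t x) volume 0 1 :=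
    fun p q => II3 ht hα hβ p q
  intro d
  induction d with
  | zero =>
    intro Q hQ m _
    have hQ' : Q = Polynomial.C (Q.coeff 0) := Polynomial.eq_C_of_natDegree_le_zero hQ
    have hP0 : P 0 = 1 := ((hmonic 0).1.natDegree_eq_zero).1 (hmonic 0).2
    have hpt : ∀ x : ℝ, Q.eval x * (P m).eval x * genJacobiWeight α β γ t x
        = Q.coeff 0 * ((P 0).eval x * (P m).eval x * genJacobiWeight α β γ t x) := by
      intro x
      rw [hP0]
      conv_lhs => rw [hQ']
      simp only [Polynomial.eval_C, Polynomial.eval_one]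
      ring
    simp only [hpt]
    rw [intervalIntegral.integral_const_mul, horth 0 m]
    rcases Nat.eq_zero_or_pos m with hm | hm
    · subst hm; simp
    · rw [if_neg (by omega)]
      have : Q.coeff m = 0 := by
        rw [hQ', Polynomial.coeff_C, if_neg (by omega)]
      rw [this]; ring
  | succ d ih =>
    intro Q hQ m hm
    set c := Q.coeff (d + 1) with hc
    set R := Q - Polynomial.C c * P (d + 1) with hRdef
    have hPn : (P (d + 1)).natDegree = d + 1 := (hmonic (d + 1)).2
    have hPlead : (P (d + 1)).coeff (d + 1) = 1 := by
      have := (hmonic (d + 1)).1.coeff_natDegree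
      rwa [hPn] at this
    have hRdeg : R.natDegree ≤ d := by
      refine Polynomial.natDegree_le_iff_coeff_eq_zero.mpr fun N hN => ?_
      rcases eq_or_lt_of_le (Nat.succ_le_of_lt hN) with hN' | hN'
      · rw [hRdef]
        simp only [Polynomial.coeff_sub, Polynomial.coeff_C_mul]
        rw [← hN', hPlead, ← hc]; ring
      · rw [hRdef]
        simp only [Polynomial.coeff_sub, Polynomial.coeff_C_mul]
        rw [Polynomial.coeff_eq_zero_of_natDegree_lt (lt_of_le_of_lt hQ hN'),
          Polynomial.coeff_eq_zero_of_natDegree_lt (by omega : (P (d+1)).natDegree < N)]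
        ring
    have hpt : ∀ x : ℝ, Q.eval x * (P m).eval x * genJacobiWeight α β γ t x
        = c * ((P (d + 1)).eval x * (P m).eval x * genJacobiWeight α β γ t x)
          + R.eval x * (P m).eval x * genJacobiWeight α β γ t x := by
      intro x
      rw [hRdef]
      simp only [Polynomial.eval_sub, Polynomial.eval_mul, Polynomial.eval_C]
      ring
    simp only [hpt]
    rw [intervalIntegral.integral_add ((II3 (P (d+1)) (P m)).const_mul c) (II3 R (P m)),
      intervalIntegral.integral_const_mul, horth (d + 1) m,
      ih R hRdeg m (le_trans (Nat.le_succ d) hm)]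
    have hQcoeff : Q.coeff m = c * (P (d + 1)).coeff m + R.coeff m := by
      rw [hRdef]; simp only [Polynomial.coeff_sub, Polynomial.coeff_C_mul]; ring
    rcases eq_or_lt_of_le hm with hm' | hm'
    · rw [if_pos hm', hQcoeff, ← hm', hPlead]; ring
    · rw [if_neg (by omega), hQcoeff,
        Polynomial.coeff_eq_zero_of_natDegree_lt (by omega : (P (d+1)).natDegree < m)]
      ring

end GJWAux

theorem statement12
    (α β γ t : ℝ) (hα : 0 < α) (hβ : 0 < β) (ht : t < 0)
    (P : ℕ → Polynomial ℝ) (h : ℕ → ℝ)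
    (hmonic : ∀ n, (P n).Monic ∧ (P n).natDegree = n)
    (hpos : ∀ n, 0 < h n)
    (horth : ∀ m n, (∫ x in (0:ℝ)..1,
        (P m).eval x * (P n).eval x * genJacobiWeight α β γ t x)
      = if m = n then h n else 0)
    (a b : ℕ → ℝ) (hb0 : b 0 = 0)
    (hrec : ∀ n, ∀ x : ℝ, x * (P n).eval x
      = (P (n + 1)).eval x + a n * (P n).eval x + b n * (P (n - 1)).eval x)
    (p1 : ℕ → ℝ) (hp10 : p1 0 = 0)
    (hp1 : ∀ n, 1 ≤ n → p1 n = (P n).coeff (n - 1))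
    (r rs : ℕ → ℝ)
    (hr0 : r 0 = 0) (hrs0 : rs 0 = 0)
    (hr : ∀ n, 1 ≤ n → r n = β / h (n - 1) *
      ∫ y in (0:ℝ)..1, (P (n - 1)).eval y * (P n).eval y * genJacobiWeight α β γ t y / (1 - y))
    (hrs : ∀ n, 1 ≤ n → rs n = α / h (n - 1) *
      ∫ y in (0:ℝ)..1, (P (n - 1)).eval y * (P n).eval y * genJacobiWeight α β γ t y / y)
    :
    (∀ n : ℕ, a n = t * (rs (n + 1) - rs n) - (t - 1) * (r (n + 1) - r n) + t) ∧
    (∀ n : ℕ, p1 n = (t - 1) * r n - t * rs n - n * t) := by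
  have expand := GJWAux.expand hα hβ ht P h hmonic horth
  have claim2 : ∀ n : ℕ, p1 n = (t - 1) * r n - t * rs n - n * t := by
    intro n
    cases n with
    | zero => simp [hp10, hr0, hrs0]
    | succ m =>
      have hm1 : (1:ℕ) ≤ m + 1 := by omega
      have hPm1 : (P (m+1)).natDegree = m+1 := (hmonic (m+1)).2
      have hPm : (P m).natDegree = m := (hmonic m).2
      have hlead : (P (m+1)).coeff (m+1) = 1 := by
        have := (hmonic (m+1)).1.coeff_natDegree; rwa [hPm1] at this
      have hp1m : p1 (m+1) = (P (m+1)).coeff m := by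
        have := hp1 (m+1) hm1; simpa using this
      set q : Polynomial ℝ := P (m+1) * P m with hq
      have hqcont : Continuous fun x : ℝ => q.eval x := q.continuous
      -- integrability instances
      have iW : ∀ p' q' : Polynomial ℝ, IntervalIntegrable
          (fun x => p'.eval x * q'.eval x * genJacobiWeight α β γ t x) volume 0 1 :=
        fun p' q' => GJWAux.II3 ht hα hβ p' q'
      have ig1 : ∀ p' : Polynomial ℝ, IntervalIntegrable
          (fun x => p'.eval x * ((x - t) ^ (γ-1) * x ^ α * (1 - x) ^ β)) volume 0 1 :=
        fun p' => GJWAux.II_aux ht hα.le hβ.le (γ - 1) p'.continuous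
      have ig3 : ∀ p' : Polynomial ℝ, IntervalIntegrable
          (fun x => p'.eval x * ((x - t) ^ γ * x ^ α * (1 - x) ^ (β-1))) volume 0 1 :=
        fun p' => GJWAux.II_g3 ht hα.le hβ p'.continuous
      -- T1 : derivative integral for q
      have hdeg1 : (Polynomial.derivative (P (m+1))).natDegree ≤ m := by
        have := Polynomial.natDegree_derivative_le (P (m+1)); rw [hPm1] at this; omega
      have hdeg2 : (Polynomial.derivative (P m)).natDegree ≤ m + 1 := by
        have := Polynomial.natDegree_derivative_le (P m); rw [hPm] at this; omega
      have e1 : ∀ x : ℝ, (Polynomial.derivative q).eval x * genJacobiWeight α β γ t x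
          = (Polynomial.derivative (P (m+1))).eval x * (P m).eval x * genJacobiWeight α β γ t x
            + (Polynomial.derivative (P m)).eval x * (P (m+1)).eval x
              * genJacobiWeight α β γ t x := by
        intro x
        rw [hq]
        simp only [Polynomial.derivative_mul, Polynomial.eval_add, Polynomial.eval_mul]
        ring
      have hT1 : (∫ x in (0:ℝ)..1,
          (Polynomial.derivative q).eval x * genJacobiWeight α β γ t x)
          = ((m:ℝ)+1) * h m := by
        simp only [e1]
        rw [intervalIntegral.integral_add (iW _ _) (iW _ _),
          expand m (Polynomial.derivative (P (m+1))) hdeg1 m le_rfl,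
          expand (m+1) (Polynomial.derivative (P m)) hdeg2 (m+1) le_rfl,
          Polynomial.coeff_derivative, Polynomial.coeff_derivative, hlead,
          Polynomial.coeff_eq_zero_of_natDegree_lt (by omega : (P m).natDegree < m + 1 + 1)]
        push_cast
        ring
      -- ae facts
      have hae1 : ∀ᵐ x : ℝ, x ≠ (1:ℝ) := by
        have h1 : volume ({(1:ℝ)} : Set ℝ) = 0 := Real.volume_singleton
        have := measure_eq_zero_iff_ae_notMem.mp h1
        simpa using this
      -- T3 (the α-integral) equals the rs-integral
      have hcong3 : ∀ᵐ x : ℝ, x ∈ Set.uIoc (0:ℝ) 1 →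
          (P m).eval x * (P (m+1)).eval x * genJacobiWeight α β γ t x / x
          = q.eval x * ((x - t) ^ γ * x ^ (α - 1) * (1 - x) ^ β) := by
        filter_upwards with x hx
        rw [Set.uIoc_of_le (by norm_num : (0:ℝ) ≤ 1)] at hx
        have hx0 : (0:ℝ) < x := hx.1
        rw [hq]
        simp only [Polynomial.eval_mul, genJacobiWeight, Real.rpow_sub_one hx0.ne']
        ring
      have hrsv := hrs (m+1) hm1
      rw [Nat.add_sub_cancel, intervalIntegral.integral_congr_ae hcong3] at hrsv
      have hT3 : α * (∫ x in (0:ℝ)..1, q.eval x * ((x - t) ^ γ * x ^ (α-1) * (1 - x) ^ β))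
          = rs (m+1) * h m := by
        have hhm : h m ≠ 0 := (hpos m).ne'
        rw [hrsv]; field_simp
      -- T4 (the β-integral) equals the r-integral
      have hcong4 : ∀ᵐ x : ℝ, x ∈ Set.uIoc (0:ℝ) 1 →
          (P m).eval x * (P (m+1)).eval x * genJacobiWeight α β γ t x / (1 - x)
          = q.eval x * ((x - t) ^ γ * x ^ α * (1 - x) ^ (β - 1)) := by
        filter_upwards [hae1] with x hx1 hx
        have hne : (1:ℝ) - x ≠ 0 := sub_ne_zero.mpr (Ne.symm hx1)
        rw [hq]
        simp only [Polynomial.eval_mul, genJacobiWeight, Real.rpow_sub_one hne]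
        ring
      have hrv := hr (m+1) hm1
      rw [Nat.add_sub_cancel, intervalIntegral.integral_congr_ae hcong4] at hrv
      have hT4 : β * (∫ x in (0:ℝ)..1, q.eval x * ((x - t) ^ γ * x ^ α * (1 - x) ^ (β-1)))
          = r (m+1) * h m := by
        have hhm : h m ≠ 0 := (hpos m).ne'
        rw [hrv]; field_simp
      have IA := GJWAux.parts (γ := γ) hα hβ ht q
      -- now the second identity with X * q
      have e2 : ∀ x : ℝ, (Polynomial.derivative (Polynomial.X * q)).eval x
            * genJacobiWeight α β γ t x
          = (P (m+1)).eval x * (P m).eval x * genJacobiWeight α β γ t x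
            + ((Polynomial.X * Polynomial.derivative (P (m+1))).eval x * (P m).eval x
                * genJacobiWeight α β γ t x
              + (Polynomial.X * Polynomial.derivative (P m)).eval x * (P (m+1)).eval x
                * genJacobiWeight α β γ t x) := by
        intro x
        rw [hq]
        simp only [Polynomial.derivative_mul, Polynomial.derivative_X, Polynomial.eval_add,
          Polynomial.eval_mul, Polynomial.eval_X, Polynomial.eval_one, one_mul]
        ring
      -- the D polynomial
      set D : Polynomial ℝ := Polynomial.X * Polynomial.derivative (P (m+1))
          - Polynomial.C ((m:ℝ)+1) * P (m+1) with hD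
      have hDdeg : D.natDegree ≤ m := by
        refine Polynomial.natDegree_le_iff_coeff_eq_zero.mpr fun N hN => ?_
        obtain ⟨N', rfl⟩ : ∃ N', N = N' + 1 := ⟨N - 1, by omega⟩
        rw [hD]
        simp only [Polynomial.coeff_sub, Polynomial.coeff_C_mul, Polynomial.coeff_X_mul,
          Polynomial.coeff_derivative]
        rcases eq_or_lt_of_le (by omega : m ≤ N') with hN' | hN'
        · rw [← hN', hlead]; push_cast; ring
        · rw [Polynomial.coeff_eq_zero_of_natDegree_lt (by omega : (P (m+1)).natDegree < N' + 1)]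
          ring
      have hDcoeff : D.coeff m = -(p1 (m+1)) := by
        rw [hp1m, hD]
        cases m with
        | zero =>
          simp only [Polynomial.coeff_sub, Polynomial.coeff_C_mul]
          rw [Polynomial.mul_coeff_zero, Polynomial.coeff_X_zero]
          push_cast; ring
        | succ k =>
          simp only [Polynomial.coeff_sub, Polynomial.coeff_C_mul, Polynomial.coeff_X_mul,
            Polynomial.coeff_derivative]
          push_cast; ring
      have hsplitD : ∀ x : ℝ, (Polynomial.X * Polynomial.derivative (P (m+1))).eval x
            * (P m).eval x * genJacobiWeight α β γ t x
          = D.eval x * (P m).eval x * genJacobiWeight α β γ t x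
            + ((m:ℝ)+1) * ((P (m+1)).eval x * (P m).eval x * genJacobiWeight α β γ t x) := by
        intro x
        rw [hD]
        simp only [Polynomial.eval_sub, Polynomial.eval_mul, Polynomial.eval_C]
        ring
      have hdeg3 : (Polynomial.X * Polynomial.derivative (P m)).natDegree ≤ m + 1 := by
        refine le_trans (Polynomial.natDegree_mul_le) ?_
        have hdd := Polynomial.natDegree_derivative_le (P m)
        rw [hPm] at hdd
        rw [Polynomial.natDegree_X]
        omega
      have hU1 : (∫ x in (0:ℝ)..1,
          (Polynomial.derivative (Polynomial.X * q)).eval x * genJacobiWeight α β γ t x)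
          = -(p1 (m+1)) * h m := by
        simp only [e2]
        rw [intervalIntegral.integral_add (iW _ _) ((iW _ _).add (iW _ _)),
          intervalIntegral.integral_add (iW _ _) (iW _ _), horth (m+1) m, if_neg (by omega)]
        simp only [hsplitD]
        rw [intervalIntegral.integral_add (iW _ _) ((iW _ _).const_mul _),
          intervalIntegral.integral_const_mul, horth (m+1) m, if_neg (by omega),
          expand m D hDdeg m le_rfl, hDcoeff,
          expand (m+1) (Polynomial.X * Polynomial.derivative (P m)) hdeg3 (m+1) le_rfl,
          Polynomial.coeff_X_mul, Polynomial.coeff_derivative,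
          Polynomial.coeff_eq_zero_of_natDegree_lt (by omega : (P m).natDegree < m + 1)]
        ring
      have hU2 : (∫ x in (0:ℝ)..1,
            (Polynomial.X * q).eval x * ((x - t) ^ (γ-1) * x ^ α * (1 - x) ^ β))
          = t * (∫ x in (0:ℝ)..1, q.eval x * ((x - t) ^ (γ-1) * x ^ α * (1 - x) ^ β)) := by
        have hcong : ∀ᵐ x : ℝ, x ∈ Set.uIoc (0:ℝ) 1 →
            (Polynomial.X * q).eval x * ((x - t) ^ (γ-1) * x ^ α * (1 - x) ^ β)
            = (P (m+1)).eval x * (P m).eval x * genJacobiWeight α β γ t x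
              + t * (q.eval x * ((x - t) ^ (γ-1) * x ^ α * (1 - x) ^ β)) := by
          filter_upwards with x hx
          rw [Set.uIoc_of_le (by norm_num : (0:ℝ) ≤ 1)] at hx
          have hne : x - t ≠ 0 := by have := hx.1; intro hc; linarith
          have hpow : (x - t) ^ (γ - 1) * (x - t) = (x - t) ^ γ := by
            rw [Real.rpow_sub_one hne γ, div_mul_cancel₀ _ hne]
          rw [hq]
          simp only [Polynomial.eval_mul, Polynomial.eval_X, genJacobiWeight, ← hpow]
          ring
        rw [intervalIntegral.integral_congr_ae hcong,
          intervalIntegral.integral_add (iW _ _) ((ig1 q).const_mul t),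
          intervalIntegral.integral_const_mul, horth (m+1) m, if_neg (by omega)]
        ring
      have hU3 : (∫ x in (0:ℝ)..1,
            (Polynomial.X * q).eval x * ((x - t) ^ γ * x ^ (α-1) * (1 - x) ^ β)) = 0 := by
        have hcong : ∀ᵐ x : ℝ, x ∈ Set.uIoc (0:ℝ) 1 →
            (Polynomial.X * q).eval x * ((x - t) ^ γ * x ^ (α-1) * (1 - x) ^ β)
            = (P (m+1)).eval x * (P m).eval x * genJacobiWeight α β γ t x := by
          filter_upwards with x hx
          rw [Set.uIoc_of_le (by norm_num : (0:ℝ) ≤ 1)] at hx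
          have hx0 : (0:ℝ) < x := hx.1
          rw [hq]
          simp only [Polynomial.eval_mul, Polynomial.eval_X, genJacobiWeight,
            Real.rpow_sub_one hx0.ne']
          field_simp
        rw [intervalIntegral.integral_congr_ae hcong, horth (m+1) m, if_neg (by omega)]
      have hU4 : (∫ x in (0:ℝ)..1,
            (Polynomial.X * q).eval x * ((x - t) ^ γ * x ^ α * (1 - x) ^ (β-1)))
          = ∫ x in (0:ℝ)..1, q.eval x * ((x - t) ^ γ * x ^ α * (1 - x) ^ (β-1)) := by
        have hcong : ∀ᵐ x : ℝ, x ∈ Set.uIoc (0:ℝ) 1 →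
            (Polynomial.X * q).eval x * ((x - t) ^ γ * x ^ α * (1 - x) ^ (β-1))
            = q.eval x * ((x - t) ^ γ * x ^ α * (1 - x) ^ (β-1))
              - (P (m+1)).eval x * (P m).eval x * genJacobiWeight α β γ t x := by
          filter_upwards [hae1] with x hx1 hx
          have hne : (1:ℝ) - x ≠ 0 := sub_ne_zero.mpr (Ne.symm hx1)
          have hpow : (1 - x) ^ (β - 1) * (1 - x) = (1 - x) ^ β := by
            rw [Real.rpow_sub_one hne β, div_mul_cancel₀ _ hne]
          rw [hq]
          simp only [Polynomial.eval_mul, Polynomial.eval_X, genJacobiWeight, ← hpow]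
          ring
        rw [intervalIntegral.integral_congr_ae hcong,
          intervalIntegral.integral_sub (ig3 q) (iW _ _), horth (m+1) m, if_neg (by omega)]
        ring
      have IB := GJWAux.parts (γ := γ) hα hβ ht (Polynomial.X * q)
      rw [hT1] at IA
      rw [hU1, hU2, hU3, hU4] at IB
      have hmain : p1 (m+1) * h m
          = ((t - 1) * r (m+1) - t * rs (m+1) - ((m:ℝ)+1) * t) * h m := by
        linear_combination (-1) * IB + t * IA + (-t) * hT3 + (t-1) * hT4
      have := mul_right_cancel₀ (hpos m).ne' hmain
      rw [this]
      push_cast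
      ring
  refine ⟨?_, claim2⟩
  intro n
  have hpoly : P (n+1) = Polynomial.X * P n - Polynomial.C (a n) * P n
      - Polynomial.C (b n) * P (n-1) := by
    apply Polynomial.funext
    intro x
    simp only [Polynomial.eval_sub, Polynomial.eval_mul, Polynomial.eval_C, Polynomial.eval_X]
    have := hrec n x
    linarith
  have hcoeff := congrArg (fun p => Polynomial.coeff p n) hpoly
  simp only [Polynomial.coeff_sub, Polynomial.coeff_C_mul] at hcoeff
  cases n with
  | zero =>
    have hP0 : P 0 = 1 := ((hmonic 0).1.natDegree_eq_zero).1 (hmonic 0).2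
    rw [Polynomial.mul_coeff_zero, Polynomial.coeff_X_zero, hb0, hP0] at hcoeff
    norm_num [Polynomial.coeff_one] at hcoeff
    have hp11 : p1 1 = (P 1).coeff 0 := by simpa using hp1 1 le_rfl
    have ha0 : a 0 = p1 0 - p1 1 := by
      rw [hp10, hp11, hcoeff]; ring
    rw [ha0, claim2 0, claim2 1]
    push_cast
    ring
  | succ k =>
    have hPk1lead : (P (k+1)).coeff (k+1) = 1 := by
      have := (hmonic (k+1)).1.coeff_natDegree; rwa [(hmonic (k+1)).2] at this
    simp only [Nat.add_sub_cancel] at hcoeff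
    rw [Polynomial.coeff_X_mul, hPk1lead,
      Polynomial.coeff_eq_zero_of_natDegree_lt
        (by rw [(hmonic k).2]; omega : (P k).natDegree < k + 1)] at hcoeff
    have hp1k2 : p1 (k+2) = (P (k+2)).coeff (k+1) := by simpa using hp1 (k+2) (by omega)
    have hp1k1 : p1 (k+1) = (P (k+1)).coeff k := by simpa using hp1 (k+1) (by omega)
    have ha : a (k+1) = p1 (k+1) - p1 (k+2) := by
      rw [hp1k1, hp1k2, hcoeff]; ring
    rw [ha, claim2 (k+1), claim2 (k+2)]
    push_cast
    ring
end

section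
/- For every n ≥ 0 the recurrence coefficient α_n satisfies (2n+2+α+β+γ)α_n = 2(t−1)r_n − 2t r*_n + (1−t)R_n + (α+β+1)t − β. -/
open MeasureTheory Real

namespace GJW
open Polynomial Set
variable {α β γ t : ℝ}


lemma w_contOn (hα : 0 < α) (hβ : 0 < β) (ht : t < 0) :
    ContinuousOn (genJacobiWeight α β γ t) (Icc 0 1) := by
  intro x hx
  have hx0 : (0:ℝ) ≤ x := hx.1
  have hx1 : x ≤ 1 := hx.2
  have h1 : ContinuousAt (fun x : ℝ => (x - t) ^ γ) x := by
    have : ContinuousAt (fun y : ℝ => y ^ γ) (x - t) :=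
      Real.continuousAt_rpow_const _ _ (Or.inl (by linarith))
    exact ContinuousAt.comp (g := fun y : ℝ => y ^ γ) (f := fun x : ℝ => x - t) this (by exact continuousAt_id.sub continuousAt_const)
  have h2 : ContinuousAt (fun x : ℝ => x ^ α) x :=
    Real.continuousAt_rpow_const _ _ (Or.inr hα.le)
  have h3 : ContinuousAt (fun x : ℝ => (1 - x) ^ β) x := by
    have : ContinuousAt (fun y : ℝ => y ^ β) (1 - x) :=
      Real.continuousAt_rpow_const _ _ (Or.inr hβ.le)
    exact ContinuousAt.comp (g := fun y : ℝ => y ^ β) (f := fun x : ℝ => 1 - x) this (by exact continuousAt_const.sub continuousAt_id)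
  exact (((h1.mul h2).mul h3)).continuousWithinAt

lemma w_zero (hα : 0 < α) : genJacobiWeight α β γ t 0 = 0 := by
  simp [genJacobiWeight, Real.zero_rpow hα.ne']

lemma w_one (hβ : 0 < β) : genJacobiWeight α β γ t 1 = 0 := by
  simp [genJacobiWeight, Real.zero_rpow hβ.ne']

/-- derivative of w on (0,1) -/
lemma w_hasDeriv (hα : 0 < α) (hβ : 0 < β) (ht : t < 0) {y : ℝ} (hy : y ∈ Ioo (0:ℝ) 1) :
    HasDerivAt (genJacobiWeight α β γ t)
      (genJacobiWeight α β γ t y * (γ / (y - t) + α / y - β / (1 - y))) y := by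
  have hy0 : (0:ℝ) < y := hy.1
  have hy1 : y < 1 := hy.2
  have hyt : (0:ℝ) < y - t := by linarith
  have d1 : HasDerivAt (fun x : ℝ => (x - t) ^ γ) (1 * γ * (y - t) ^ (γ - 1)) y :=
    (HasDerivAt.rpow_const ((hasDerivAt_id y).sub_const t) (Or.inl hyt.ne'))
  have d2 : HasDerivAt (fun x : ℝ => x ^ α) (α * y ^ (α - 1)) y := by
    simpa using Real.hasDerivAt_rpow_const (x := y) (p := α) (Or.inl hy0.ne')
  have d3 : HasDerivAt (fun x : ℝ => (1 - x) ^ β) ((-1) * β * (1 - y) ^ (β - 1)) y := by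
    have hb : HasDerivAt (fun x : ℝ => 1 - x) (-1) y := by
      simpa using (hasDerivAt_id' y).const_sub (1:ℝ)
    simpa using HasDerivAt.rpow_const hb (Or.inl (by linarith : (1:ℝ) - y ≠ 0))
  have := ((d1.mul d2).mul d3)
  convert this using 1
  · rfl
  · rfl
  · rfl
  unfold genJacobiWeight
  simp only [Pi.mul_apply]
  have e1 : (y - t) ^ (γ - 1) = (y - t) ^ γ / (y - t) := by
    rw [← Real.rpow_sub_one hyt.ne']
  have e2 : y ^ (α - 1) = y ^ α / y := by rw [← Real.rpow_sub_one hy0.ne']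
  have e3 : (1 - y) ^ (β - 1) = (1 - y) ^ β / (1 - y) := by
    rw [← Real.rpow_sub_one (by linarith : (1:ℝ) - y ≠ 0)]
  rw [e1, e2, e3]
  field_simp
  ring


/-- master integrability: continuous-on-(0,1] factor times y^a near 0 -/
lemma int_left {f : ℝ → ℝ} {a c : ℝ} (hc : 0 < c) (hc1 : c ≤ 1) (ha : -1 < a)
    (hf : ContinuousOn f (Icc 0 c)) :
    IntervalIntegrable (fun y => f y * y ^ a) volume 0 c := by
  rw [intervalIntegrable_iff_integrableOn_Ioo_of_le hc.le]
  obtain ⟨x0, hx0, hbd'⟩ := (isCompact_Icc (a := (0:ℝ)) (b := c)).exists_isMaxOn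
    ⟨0, by constructor <;> linarith⟩ (hf.norm)
  have hbd : ∀ y ∈ Icc (0:ℝ) c, ‖f y‖ ≤ ‖f x0‖ := fun y hy => hbd' hy
  set C := ‖f x0‖ with hC
  have hCnn : 0 ≤ C := norm_nonneg _
  have hmeas : AEStronglyMeasurable (fun y => f y * y ^ a) (volume.restrict (Ioo 0 c)) := by
    apply ContinuousOn.aestronglyMeasurable _ measurableSet_Ioo
    intro y hy
    exact ((hf.mono (Ioo_subset_Icc_self)) y hy).mul
      ((Real.continuousAt_rpow_const y a (Or.inl hy.1.ne')).continuousWithinAt)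
  have hg : IntegrableOn (fun y => C * y ^ a) (Ioo 0 c) volume := by
    have := (intervalIntegral.intervalIntegrable_rpow' (a := 0) (b := c) ha)
    rw [intervalIntegrable_iff_integrableOn_Ioo_of_le hc.le] at this
    exact this.const_mul C
  refine hg.integrable.mono hmeas ?_
  filter_upwards [ae_restrict_mem measurableSet_Ioo] with y hy
  have hy0 : (0:ℝ) < y := hy.1
  have hya : (0:ℝ) ≤ y ^ a := Real.rpow_nonneg hy0.le a
  rw [Real.norm_eq_abs, Real.norm_eq_abs, abs_mul, abs_of_nonneg hya,
    abs_of_nonneg (by positivity : (0:ℝ) ≤ C * y ^ a)]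
  exact mul_le_mul_of_nonneg_right (hbd y ⟨hy0.le, hy.2.le.trans (le_refl c)⟩) hya


lemma int_right {f : ℝ → ℝ} {b : ℝ} (hb : -1 < b)
    (hf : ContinuousOn f (Icc (1/2 : ℝ) 1)) :
    IntervalIntegrable (fun y => f y * (1 - y) ^ b) volume (1/2 : ℝ) 1 := by
  have hcomp : ContinuousOn (fun y : ℝ => f (1 - y)) (Icc 0 (1/2 : ℝ)) := by
    apply hf.comp (by fun_prop)
    intro y hy
    exact ⟨by simp at hy ⊢; linarith [hy.2], by simp at hy ⊢; linarith [hy.1]⟩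
  have h1 := int_left (f := fun y : ℝ => f (1 - y)) (a := b) (c := 1/2)
    (by norm_num) (by norm_num) hb hcomp
  have h2 := h1.comp_sub_left 1
  norm_num at h2
  exact h2.symm

/-- master integrability lemma -/
lemma int_w {γ t : ℝ} (ht : t < 0) {a b : ℝ} (ha : -1 < a) (hb : -1 < b) (q : Polynomial ℝ) :
    IntervalIntegrable (fun y => q.eval y * ((y - t) ^ γ * y ^ a * (1 - y) ^ b))
      volume 0 1 := by
  have contq : Continuous fun y : ℝ => q.eval y := q.continuous
  have c1 : ContinuousOn (fun y : ℝ => (y - t) ^ γ) (Icc (0:ℝ) 1) := by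
    intro x hx
    refine (ContinuousAt.continuousWithinAt ?_)
    exact ContinuousAt.comp (g := fun y : ℝ => y ^ γ) (f := fun x : ℝ => x - t)
      (Real.continuousAt_rpow_const _ _ (Or.inl (by intro hc; have := hx.1; linarith)))
      (by fun_prop)
  have c2 : ContinuousOn (fun y : ℝ => (1 - y) ^ b) (Icc (0:ℝ) (1/2)) := by
    intro x hx
    refine (ContinuousAt.continuousWithinAt ?_)
    exact ContinuousAt.comp (g := fun y : ℝ => y ^ b) (f := fun x : ℝ => 1 - x)
      (Real.continuousAt_rpow_const _ _ (Or.inl (by intro hc; simp at hx; nlinarith [hx.2])))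
      (by fun_prop)
  have c3 : ContinuousOn (fun y : ℝ => y ^ a) (Icc (1/2:ℝ) 1) := by
    intro x hx
    refine (ContinuousAt.continuousWithinAt ?_)
    exact Real.continuousAt_rpow_const _ _ (Or.inl (by intro hc; simp at hx; nlinarith [hx.1]))
  have hL : IntervalIntegrable (fun y => q.eval y * ((y - t) ^ γ * y ^ a * (1 - y) ^ b))
      volume 0 (1/2) := by
    have := int_left (f := fun y : ℝ => q.eval y * (y - t) ^ γ * (1 - y) ^ b) (a := a)
      (c := 1/2) (by norm_num) (by norm_num) ha
      (((contq.continuousOn.mul (c1.mono (by intro x hx; exact ⟨hx.1, by have := hx.2; linarith⟩))).mul c2))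
    have heq : (fun y : ℝ => q.eval y * (y - t) ^ γ * (1 - y) ^ b * y ^ a)
        = fun y : ℝ => q.eval y * ((y - t) ^ γ * y ^ a * (1 - y) ^ b) := by
      funext y; ring
    rwa [heq] at this
  have hR : IntervalIntegrable (fun y => q.eval y * ((y - t) ^ γ * y ^ a * (1 - y) ^ b))
      volume (1/2) 1 := by
    have := int_right (f := fun y : ℝ => q.eval y * (y - t) ^ γ * y ^ a) (b := b) hb
      (((contq.continuousOn.mul (c1.mono (by intro x hx; exact ⟨by have := hx.1; linarith, hx.2⟩))).mul c3))
    have heq : (fun y : ℝ => q.eval y * (y - t) ^ γ * y ^ a * (1 - y) ^ b)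
        = fun y : ℝ => q.eval y * ((y - t) ^ γ * y ^ a * (1 - y) ^ b) := by
      funext y; ring
    rwa [heq] at this
  exact hL.trans hR


lemma ae_Ioo {f g : ℝ → ℝ} (h : ∀ y ∈ Ioo (0:ℝ) 1, f y = g y) :
    ∀ᵐ (y : ℝ), y ∈ Set.uIoc (0:ℝ) 1 → f y = g y := by
  have h2 : ∀ᵐ (y : ℝ), y ≠ 1 := by
    rw [MeasureTheory.ae_iff]
    convert Real.volume_singleton (a := 1) using 2
    ext y; simp
  filter_upwards [h2] with y hy1 hy
  rw [Set.uIoc_of_le (by norm_num : (0:ℝ) ≤ 1)] at hy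
  exact h y ⟨hy.1, lt_of_le_of_ne hy.2 hy1⟩

lemma integral_congr_Ioo {f g : ℝ → ℝ} (h : ∀ y ∈ Ioo (0:ℝ) 1, f y = g y) :
    ∫ y in (0:ℝ)..1, f y = ∫ y in (0:ℝ)..1, g y :=
  intervalIntegral.integral_congr_ae (ae_Ioo h)

lemma intint_congr_Ioo {f g : ℝ → ℝ} (h : ∀ y ∈ Ioo (0:ℝ) 1, f y = g y)
    (hg : IntervalIntegrable g volume 0 1) : IntervalIntegrable f volume 0 1 := by
  rw [intervalIntegrable_iff] at hg ⊢
  exact hg.congr ((MeasureTheory.ae_restrict_iff' measurableSet_uIoc).mpr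
    ((ae_Ioo h).mono fun y hy m => (hy m).symm))


variable {α β γ t : ℝ}

lemma int_poly_w (hα : 0 < α) (hβ : 0 < β) (ht : t < 0) (q : Polynomial ℝ) :
    IntervalIntegrable (fun y => q.eval y * genJacobiWeight α β γ t y) volume 0 1 :=
  int_w ht (by linarith) (by linarith) q

lemma int_poly_w_div_y (hα : 0 < α) (hβ : 0 < β) (ht : t < 0) (q : Polynomial ℝ) :
    IntervalIntegrable (fun y => q.eval y * genJacobiWeight α β γ t y / y) volume 0 1 := by
  apply intint_congr_Ioo (g := fun y => q.eval y * ((y - t) ^ γ * y ^ (α-1) * (1 - y) ^ β))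
  · intro y hy
    unfold genJacobiWeight
    rw [Real.rpow_sub_one hy.1.ne' α]
    field_simp
  · exact int_w ht (by linarith) (by linarith) q

lemma int_poly_w_div_one_sub (hα : 0 < α) (hβ : 0 < β) (ht : t < 0) (q : Polynomial ℝ) :
    IntervalIntegrable (fun y => q.eval y * genJacobiWeight α β γ t y / (1 - y)) volume 0 1 := by
  apply intint_congr_Ioo (g := fun y => q.eval y * ((y - t) ^ γ * y ^ α * (1 - y) ^ (β-1)))
  · intro y hy
    unfold genJacobiWeight
    rw [Real.rpow_sub_one (by have := hy.2; intro hc; nlinarith : (1:ℝ) - y ≠ 0) β]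
    field_simp
  · exact int_w ht (by linarith) (by linarith) q


lemma coeffX0 (q : Polynomial ℝ) : (X * q).coeff 0 = 0 := by
  rw [Polynomial.mul_coeff_zero]; simp

lemma helperD (q : Polynomial ℝ) (k : ℕ) :
    (X * derivative q).coeff k = q.coeff k * (k : ℝ) := by
  cases k with
  | zero => simp [coeffX0]
  | succ j =>
    rw [Polynomial.coeff_X_mul, Polynomial.coeff_derivative]
    push_cast; ring

lemma helperD3 (q : Polynomial ℝ) (k : ℕ) :
    (X * (X * derivative q)).coeff k = (X * q).coeff k * ((k : ℝ) - 1) := by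
  cases k with
  | zero => simp [coeffX0]
  | succ j =>
    rw [Polynomial.coeff_X_mul, Polynomial.coeff_X_mul, helperD]
    push_cast; ring

lemma ndd (q : Polynomial ℝ) : (derivative q).natDegree ≤ q.natDegree :=
  (Polynomial.natDegree_derivative_le q).trans (Nat.sub_le _ _)

lemma ndXd (q : Polynomial ℝ) : (X * derivative q).natDegree ≤ q.natDegree := by
  rcases eq_or_ne (derivative q) 0 with h0 | h0
  · simp [h0]
  · have h1 : 1 ≤ q.natDegree := by
      by_contra hc
      have : q.natDegree = 0 := by omega
      have : q = C (q.coeff 0) := Polynomial.eq_C_of_natDegree_le_zero (by omega)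
      exact h0 (by rw [this, Polynomial.derivative_C])
    calc (X * derivative q).natDegree ≤ X.natDegree + (derivative q).natDegree :=
          Polynomial.natDegree_mul_le
      _ ≤ 1 + (q.natDegree - 1) := by
          rw [Polynomial.natDegree_X]
          exact Nat.add_le_add_left (Polynomial.natDegree_derivative_le q) 1
      _ ≤ q.natDegree := by omega

lemma ndXm (q : Polynomial ℝ) : (X * q).natDegree ≤ q.natDegree + 1 := by
  calc (X * q).natDegree ≤ X.natDegree + q.natDegree := Polynomial.natDegree_mul_le
    _ ≤ q.natDegree + 1 := by rw [Polynomial.natDegree_X]; omega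

lemma ndXXd (q : Polynomial ℝ) : (X * (X * derivative q)).natDegree ≤ q.natDegree + 1 := by
  calc (X * (X * derivative q)).natDegree ≤ X.natDegree + (X * derivative q).natDegree :=
        Polynomial.natDegree_mul_le
    _ ≤ q.natDegree + 1 := by rw [Polynomial.natDegree_X]; have := ndXd q; omega


lemma int_pp (hα : 0 < α) (hβ : 0 < β) (ht : t < 0) (q r : Polynomial ℝ) :
    IntervalIntegrable (fun y => q.eval y * r.eval y * genJacobiWeight α β γ t y)
      volume 0 1 := by
  simpa only [Polynomial.eval_mul] using int_poly_w hα hβ ht (q * r)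

lemma orth_zero (hα : 0 < α) (hβ : 0 < β) (ht : t < 0)
    (P : ℕ → Polynomial ℝ) (h : ℕ → ℝ)
    (hmonic : ∀ n, (P n).Monic ∧ (P n).natDegree = n)
    (horth : ∀ m n, (∫ x in (0:ℝ)..1,
        (P m).eval x * (P n).eval x * genJacobiWeight α β γ t x)
      = if m = n then h n else 0) :
    ∀ d n, d < n → ∀ q : Polynomial ℝ, q.natDegree ≤ d →
      ∫ y in (0:ℝ)..1, q.eval y * (P n).eval y * genJacobiWeight α β γ t y = 0 := by
  intro d
  induction d using Nat.strong_induction_on with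
  | _ d IH =>
  intro n hdn q hq
  match d with
  | 0 =>
    have hq0 : q = Polynomial.C (q.coeff 0) := Polynomial.eq_C_of_natDegree_le_zero hq
    have hP0 : P 0 = 1 := ((hmonic 0).1.natDegree_eq_zero).mp (hmonic 0).2
    have h0n := horth 0 n
    rw [if_neg (by omega : 0 ≠ n), hP0] at h0n
    simp only [Polynomial.eval_one, one_mul] at h0n
    calc ∫ y in (0:ℝ)..1, q.eval y * (P n).eval y * genJacobiWeight α β γ t y
        = ∫ y in (0:ℝ)..1, q.coeff 0 * ((P n).eval y * genJacobiWeight α β γ t y) := by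
          apply intervalIntegral.integral_congr
          intro y _
          rw [hq0]; simp; ring
      _ = q.coeff 0 * ∫ y in (0:ℝ)..1, (P n).eval y * genJacobiWeight α β γ t y :=
          intervalIntegral.integral_const_mul _ _
      _ = 0 := by rw [h0n, mul_zero]
  | (e+1) =>
    set c := q.coeff (e+1) with hc
    set q' := q - Polynomial.C c * P (e+1) with hq'
    have hdeg' : q'.natDegree ≤ e := by
      rw [Polynomial.natDegree_le_iff_coeff_eq_zero]
      intro N hN
      have hPdeg := (hmonic (e+1)).2
      rcases Nat.lt_or_ge N (e+2) with hN2 | hN2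
      · have : N = e + 1 := by omega
        subst this
        simp only [hq', Polynomial.coeff_sub, Polynomial.coeff_C_mul]
        have : (P (e+1)).coeff (e+1) = 1 := by
          have := (hmonic (e+1)).1.coeff_natDegree
          rwa [hPdeg] at this
        rw [this, ← hc]; ring
      · simp only [hq', Polynomial.coeff_sub, Polynomial.coeff_C_mul]
        rw [Polynomial.coeff_eq_zero_of_natDegree_lt (by omega : q.natDegree < N),
          Polynomial.coeff_eq_zero_of_natDegree_lt (by rw [hPdeg]; omega)]
        ring
    have hsplit : ∫ y in (0:ℝ)..1, q.eval y * (P n).eval y * genJacobiWeight α β γ t y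
        = (∫ y in (0:ℝ)..1, q'.eval y * (P n).eval y * genJacobiWeight α β γ t y)
          + ∫ y in (0:ℝ)..1, c * ((P (e+1)).eval y * (P n).eval y * genJacobiWeight α β γ t y) := by
      rw [← intervalIntegral.integral_add (int_pp hα hβ ht q' (P n))
        ((int_pp hα hβ ht (P (e+1)) (P n)).const_mul c)]
      apply intervalIntegral.integral_congr
      intro y _
      simp only [hq', Polynomial.eval_sub, Polynomial.eval_mul, Polynomial.eval_C]
      ring
    rw [hsplit, IH e (by omega) n (by omega) q' hdeg',
      intervalIntegral.integral_const_mul, horth (e+1) n, if_neg (by omega : e+1 ≠ n)]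
    ring

lemma orth_eval (hα : 0 < α) (hβ : 0 < β) (ht : t < 0)
    (P : ℕ → Polynomial ℝ) (h : ℕ → ℝ)
    (hmonic : ∀ n, (P n).Monic ∧ (P n).natDegree = n)
    (horth : ∀ m n, (∫ x in (0:ℝ)..1,
        (P m).eval x * (P n).eval x * genJacobiWeight α β γ t x)
      = if m = n then h n else 0) :
    ∀ n (q : Polynomial ℝ), q.natDegree ≤ n →
      ∫ y in (0:ℝ)..1, q.eval y * (P n).eval y * genJacobiWeight α β γ t y
        = q.coeff n * h n := by
  intro n q hq
  set c := q.coeff n with hc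
  set q' := q - Polynomial.C c * P n with hq'
  have hPdeg := (hmonic n).2
  have hPlead : (P n).coeff n = 1 := by
    have := (hmonic n).1.coeff_natDegree
    rwa [hPdeg] at this
  have hq'0 : ∀ N, n ≤ N → q'.coeff N = 0 := by
    intro N hN
    rcases eq_or_lt_of_le hN with hE | hL
    · subst hE
      simp only [hq', Polynomial.coeff_sub, Polynomial.coeff_C_mul, hPlead, ← hc]; ring
    · simp only [hq', Polynomial.coeff_sub, Polynomial.coeff_C_mul]
      rw [Polynomial.coeff_eq_zero_of_natDegree_lt (by omega : q.natDegree < N),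
        Polynomial.coeff_eq_zero_of_natDegree_lt (by omega : (P n).natDegree < N)]
      ring
  have hzero : ∫ y in (0:ℝ)..1, q'.eval y * (P n).eval y * genJacobiWeight α β γ t y = 0 := by
    match n with
    | 0 =>
      have : q' = 0 := by
        apply Polynomial.ext; intro N
        simp only [Polynomial.coeff_zero]
        exact hq'0 N (Nat.zero_le N)
      rw [this]
      simp
    | (m+1) =>
      apply orth_zero hα hβ ht P h hmonic horth m (m+1) (by omega)
      rw [Polynomial.natDegree_le_iff_coeff_eq_zero]
      intro N hN
      exact hq'0 N (by omega)
  have hsplit : ∫ y in (0:ℝ)..1, q.eval y * (P n).eval y * genJacobiWeight α β γ t y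
      = (∫ y in (0:ℝ)..1, q'.eval y * (P n).eval y * genJacobiWeight α β γ t y)
        + ∫ y in (0:ℝ)..1, c * ((P n).eval y * (P n).eval y * genJacobiWeight α β γ t y) := by
    rw [← intervalIntegral.integral_add (int_pp hα hβ ht q' (P n))
      ((int_pp hα hβ ht (P n) (P n)).const_mul c)]
    apply intervalIntegral.integral_congr
    intro y _
    simp only [hq', Polynomial.eval_sub, Polynomial.eval_mul, Polynomial.eval_C]
    ring
  rw [hsplit, hzero, intervalIntegral.integral_const_mul, horth n n, if_pos rfl]
  ring

lemma E1 (hα : 0 < α) (hβ : 0 < β) (ht : t < 0)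
    (P : ℕ → Polynomial ℝ) (h : ℕ → ℝ)
    (hmonic : ∀ n, (P n).Monic ∧ (P n).natDegree = n)
    (horth : ∀ m n, (∫ x in (0:ℝ)..1,
        (P m).eval x * (P n).eval x * genJacobiWeight α β γ t x)
      = if m = n then h n else 0) :
    ∀ n (q : Polynomial ℝ), q.natDegree ≤ n + 1 →
      ∫ y in (0:ℝ)..1, q.eval y * (P n).eval y * genJacobiWeight α β γ t y
        = (q.coeff n - q.coeff (n+1) * (P (n+1)).coeff n) * h n := by
  intro n q hq
  set c := q.coeff (n+1) with hc
  set q' := q - Polynomial.C c * P (n+1) with hq'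
  have hPdeg := (hmonic (n+1)).2
  have hPlead : (P (n+1)).coeff (n+1) = 1 := by
    have := (hmonic (n+1)).1.coeff_natDegree
    rwa [hPdeg] at this
  have hdeg' : q'.natDegree ≤ n := by
    rw [Polynomial.natDegree_le_iff_coeff_eq_zero]
    intro N hN
    rcases Nat.lt_or_ge N (n+2) with hN2 | hN2
    · have : N = n + 1 := by omega
      subst this
      simp only [hq', Polynomial.coeff_sub, Polynomial.coeff_C_mul, hPlead, ← hc]; ring
    · simp only [hq', Polynomial.coeff_sub, Polynomial.coeff_C_mul]
      rw [Polynomial.coeff_eq_zero_of_natDegree_lt (by omega : q.natDegree < N),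
        Polynomial.coeff_eq_zero_of_natDegree_lt (by omega : (P (n+1)).natDegree < N)]
      ring
  have hsplit : ∫ y in (0:ℝ)..1, q.eval y * (P n).eval y * genJacobiWeight α β γ t y
      = (∫ y in (0:ℝ)..1, q'.eval y * (P n).eval y * genJacobiWeight α β γ t y)
        + ∫ y in (0:ℝ)..1, c * ((P (n+1)).eval y * (P n).eval y * genJacobiWeight α β γ t y) := by
    rw [← intervalIntegral.integral_add (int_pp hα hβ ht q' (P n))
      ((int_pp hα hβ ht (P (n+1)) (P n)).const_mul c)]
    apply intervalIntegral.integral_congr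
    intro y _
    simp only [hq', Polynomial.eval_sub, Polynomial.eval_mul, Polynomial.eval_C]
    ring
  rw [hsplit, orth_eval hα hβ ht P h hmonic horth n q' hdeg',
    intervalIntegral.integral_const_mul, horth (n+1) n, if_neg (by omega : n+1 ≠ n)]
  simp only [hq', Polynomial.coeff_sub, Polynomial.coeff_C_mul, ← hc]
  ring


lemma ftc1 (hα : 0 < α) (hβ : 0 < β) (ht : t < 0) (F : Polynomial ℝ) :
    (∫ y in (0:ℝ)..1, ((Polynomial.C (1+γ+α+β) * F
        + (Polynomial.X - Polynomial.C t) * Polynomial.derivative F).eval y)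
        * genJacobiWeight α β γ t y)
      - α * t * (∫ y in (0:ℝ)..1, F.eval y * genJacobiWeight α β γ t y / y)
      - β * (1-t) * (∫ y in (0:ℝ)..1, F.eval y * genJacobiWeight α β γ t y / (1-y)) = 0 := by
  set q1 := Polynomial.C (1+γ+α+β) * F
        + (Polynomial.X - Polynomial.C t) * Polynomial.derivative F with hq1
  have i1 := int_poly_w (γ := γ) hα hβ ht q1
  have i2 := (int_poly_w_div_y (γ := γ) hα hβ ht F).const_mul (α * t)
  have i3 := (int_poly_w_div_one_sub (γ := γ) hα hβ ht F).const_mul (β * (1-t))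
  have hderiv : ∀ y ∈ Ioo (0:ℝ) 1,
      HasDerivAt (fun y => (y - t) * F.eval y * genJacobiWeight α β γ t y)
        (q1.eval y * genJacobiWeight α β γ t y
          - α * t * (F.eval y * genJacobiWeight α β γ t y / y)
          - β * (1-t) * (F.eval y * genJacobiWeight α β γ t y / (1-y))) y := by
    intro y hy
    have hy0 : (0:ℝ) < y := hy.1
    have hy1 : y < 1 := hy.2
    have hu : HasDerivAt (fun y : ℝ => (y - t) * F.eval y)
        (1 * F.eval y + (y - t) * (Polynomial.derivative F).eval y) y :=
      (((hasDerivAt_id y).sub_const t).mul (F.hasDerivAt y))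
    have hw := w_hasDeriv (γ := γ) hα hβ ht hy
    have := hu.mul hw
    convert this using 1
    · rfl
    · rfl
    · rfl
    rw [hq1]
    simp only [Polynomial.eval_add, Polynomial.eval_mul, Polynomial.eval_sub,
      Polynomial.eval_C, Polynomial.eval_X]
    have hyne : y ≠ 0 := hy0.ne'
    have hyt : y - t ≠ 0 := by linarith
    have h1y : (1:ℝ) - y ≠ 0 := by linarith
    field_simp [hyne, hyt, h1y]
    ring
  have hcont : ContinuousOn (fun y => (y - t) * F.eval y * genJacobiWeight α β γ t y)
      (Icc (0:ℝ) 1) := by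
    exact (((continuous_id.sub continuous_const).mul F.continuous).continuousOn).mul
      (w_contOn hα hβ ht)
  have hftc := intervalIntegral.integral_eq_sub_of_hasDerivAt_of_le (by norm_num : (0:ℝ) ≤ 1)
    hcont hderiv ((i1.sub i2).sub i3)
  have hbd : (fun y => (y - t) * F.eval y * genJacobiWeight α β γ t y) 1
      - (fun y => (y - t) * F.eval y * genJacobiWeight α β γ t y) 0 = 0 := by
    simp only [w_zero hα, w_one hβ]
    ring
  rw [hbd] at hftc
  rw [intervalIntegral.integral_sub (i1.sub i2) i3, intervalIntegral.integral_sub i1 i2,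
    intervalIntegral.integral_const_mul, intervalIntegral.integral_const_mul] at hftc
  exact hftc

lemma ftc2 (hα : 0 < α) (hβ : 0 < β) (ht : t < 0) (F : Polynomial ℝ) :
    (∫ y in (0:ℝ)..1, ((Polynomial.C (1+t) * F - Polynomial.C 2 * Polynomial.X * F
        + (Polynomial.C 1 - Polynomial.X) * (Polynomial.X - Polynomial.C t) * Polynomial.derivative F
        + (Polynomial.C γ * (Polynomial.C 1 - Polynomial.X)
          + Polynomial.C α * (Polynomial.C (1+t) - Polynomial.X)
          - Polynomial.C β * (Polynomial.X - Polynomial.C t)) * F).eval y)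
        * genJacobiWeight α β γ t y)
      - α * t * (∫ y in (0:ℝ)..1, F.eval y * genJacobiWeight α β γ t y / y) = 0 := by
  set q2 := Polynomial.C (1+t) * F - Polynomial.C 2 * Polynomial.X * F
        + (Polynomial.C 1 - Polynomial.X) * (Polynomial.X - Polynomial.C t) * Polynomial.derivative F
        + (Polynomial.C γ * (Polynomial.C 1 - Polynomial.X)
          + Polynomial.C α * (Polynomial.C (1+t) - Polynomial.X)
          - Polynomial.C β * (Polynomial.X - Polynomial.C t)) * F with hq2
  have i1 := int_poly_w (γ := γ) hα hβ ht q2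
  have i2 := (int_poly_w_div_y (γ := γ) hα hβ ht F).const_mul (α * t)
  have hderiv : ∀ y ∈ Ioo (0:ℝ) 1,
      HasDerivAt (fun y => (1 - y) * (y - t) * F.eval y * genJacobiWeight α β γ t y)
        (q2.eval y * genJacobiWeight α β γ t y
          - α * t * (F.eval y * genJacobiWeight α β γ t y / y)) y := by
    intro y hy
    have hy0 : (0:ℝ) < y := hy.1
    have hy1 : y < 1 := hy.2
    have hu : HasDerivAt (fun y : ℝ => (1 - y) * (y - t) * F.eval y)
        (((-1) * (y - t) + (1 - y) * 1) * F.eval y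
          + (1 - y) * (y - t) * (Polynomial.derivative F).eval y) y := by
      have h1 : HasDerivAt (fun y : ℝ => (1 - y) * (y - t))
          ((-1) * (y - t) + (1 - y) * 1) y := by
        have ha : HasDerivAt (fun y : ℝ => 1 - y) (-1) y := by
          simpa using (hasDerivAt_id' y).const_sub (1:ℝ)
        exact ha.mul ((hasDerivAt_id y).sub_const t)
      exact h1.mul (F.hasDerivAt y)
    have hw := w_hasDeriv (γ := γ) hα hβ ht hy
    have := hu.mul hw
    convert this using 1
    · rfl
    · rfl
    · rfl
    rw [hq2]
    simp only [Polynomial.eval_add, Polynomial.eval_mul, Polynomial.eval_sub,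
      Polynomial.eval_C, Polynomial.eval_X]
    have hyne : y ≠ 0 := hy0.ne'
    have hyt : y - t ≠ 0 := by linarith
    have h1y : (1:ℝ) - y ≠ 0 := by linarith
    field_simp [hyne, hyt, h1y]
    ring
  have hcont : ContinuousOn (fun y => (1 - y) * (y - t) * F.eval y * genJacobiWeight α β γ t y)
      (Icc (0:ℝ) 1) := by
    exact ((((continuous_const.sub continuous_id).mul
      (continuous_id.sub continuous_const)).mul F.continuous).continuousOn).mul
      (w_contOn hα hβ ht)
  have hftc := intervalIntegral.integral_eq_sub_of_hasDerivAt_of_le (by norm_num : (0:ℝ) ≤ 1)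
    hcont hderiv (i1.sub i2)
  have hbd : (fun y => (1 - y) * (y - t) * F.eval y * genJacobiWeight α β γ t y) 1
      - (fun y => (1 - y) * (y - t) * F.eval y * genJacobiWeight α β γ t y) 0 = 0 := by
    simp only [w_zero hα, w_one hβ]
    ring
  rw [hbd] at hftc
  rw [intervalIntegral.integral_sub i1 i2, intervalIntegral.integral_const_mul] at hftc
  exact hftc

end GJW

open GJW Polynomial Set in
theorem statement13
    (α β γ t : ℝ) (hα : 0 < α) (hβ : 0 < β) (ht : t < 0)
    (P : ℕ → Polynomial ℝ) (h : ℕ → ℝ)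
    (hmonic : ∀ n, (P n).Monic ∧ (P n).natDegree = n)
    (hpos : ∀ n, 0 < h n)
    (horth : ∀ m n, (∫ x in (0:ℝ)..1,
        (P m).eval x * (P n).eval x * genJacobiWeight α β γ t x)
      = if m = n then h n else 0)
    (a b : ℕ → ℝ) (hb0 : b 0 = 0)
    (hrec : ∀ n, ∀ x : ℝ, x * (P n).eval x
      = (P (n + 1)).eval x + a n * (P n).eval x + b n * (P (n - 1)).eval x)
    (R r rs : ℕ → ℝ)
    (hR : ∀ n, R n = β / h n *
      ∫ y in (0:ℝ)..1, ((P n).eval y) ^ 2 * genJacobiWeight α β γ t y / (1 - y))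
    (hr0 : r 0 = 0) (hrs0 : rs 0 = 0)
    (hr : ∀ n, 1 ≤ n → r n = β / h (n - 1) *
      ∫ y in (0:ℝ)..1, (P (n - 1)).eval y * (P n).eval y * genJacobiWeight α β γ t y / (1 - y))
    (hrs : ∀ n, 1 ≤ n → rs n = α / h (n - 1) *
      ∫ y in (0:ℝ)..1, (P (n - 1)).eval y * (P n).eval y * genJacobiWeight α β γ t y / y)
    :
    ∀ n : ℕ,
      (2 * n + 2 + α + β + γ) * a n
        = 2 * (t - 1) * r n - 2 * t * rs n + (1 - t) * R n + (α + β + 1) * t - β := by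
  intro n
  have hαne : α ≠ 0 := ne_of_gt hα
  have hβne : β ≠ 0 := ne_of_gt hβ
  have hPdeg : ∀ k, (P k).natDegree = k := fun k => (hmonic k).2
  have hPlead : ∀ k, (P k).coeff k = 1 := fun k => by
    have := (hmonic k).1.coeff_natDegree
    rwa [hPdeg k] at this
  have hPhigh : ∀ k j, k < j → (P k).coeff j = 0 := fun k j hj =>
    Polynomial.coeff_eq_zero_of_natDegree_lt (by rw [hPdeg]; exact hj)
  have Prec : ∀ k, Polynomial.X * P k
      = P (k+1) + Polynomial.C (a k) * P k + Polynomial.C (b k) * P (k-1) := by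
    intro k
    apply Polynomial.funext
    intro x
    simp only [Polynomial.eval_mul, Polynomial.eval_add, Polynomial.eval_X, Polynomial.eval_C]
    exact hrec k x
  -- the subleading coefficient identity from the recurrence
  have pstep : ∀ k, (P (k+1)).coeff k = (Polynomial.X * P k).coeff k - a k := by
    intro k
    have hc := congrArg (fun q : Polynomial ℝ => q.coeff k) (Prec k)
    simp only [Polynomial.coeff_add, Polynomial.coeff_C_mul] at hc
    rw [hPlead k] at hc
    match k with
    | 0 =>
      rw [hb0] at hc
      rw [coeffX0] at hc ⊢
      simp at hc
      linarith
    | (j+1) =>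
      simp only [Nat.add_sub_cancel] at hc
      rw [hPhigh j (j+1) (by omega)] at hc
      linarith [hc]
  -- eqB : value of the subleading coefficient
  have eqB : (Polynomial.X * P n).coeff n = -t*(n:ℝ) - t*rs n - (1-t)*r n := by
    match n with
    | 0 =>
      rw [coeffX0, hr0, hrs0]
      push_cast; ring
    | (m+1) =>
      have ftcB := ftc1 (γ := γ) hα hβ ht (P (m+1) * P m)
      set qB1 := Polynomial.C (1+γ+α+β) * P (m+1) + Polynomial.X * derivative (P (m+1))
        + Polynomial.C (-t) * derivative (P (m+1)) with hqB1
      set qB2 := Polynomial.X * derivative (P m) + Polynomial.C (-t) * derivative (P m) with hqB2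
      have hpoly : Polynomial.C (1+γ+α+β) * (P (m+1) * P m)
          + (Polynomial.X - Polynomial.C t) * Polynomial.derivative (P (m+1) * P m)
          = qB1 * P m + qB2 * P (m+1) := by
        rw [Polynomial.derivative_mul, hqB1, hqB2]
        simp only [Polynomial.C_neg]
        ring
      rw [hpoly] at ftcB
      have hsplit : (∫ y in (0:ℝ)..1, (qB1 * P m + qB2 * P (m+1)).eval y
            * genJacobiWeight α β γ t y)
          = (∫ y in (0:ℝ)..1, qB1.eval y * (P m).eval y * genJacobiWeight α β γ t y)
            + ∫ y in (0:ℝ)..1, qB2.eval y * (P (m+1)).eval y * genJacobiWeight α β γ t y := by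
        rw [← intervalIntegral.integral_add (int_pp hα hβ ht qB1 (P m))
          (int_pp hα hβ ht qB2 (P (m+1)))]
        apply intervalIntegral.integral_congr
        intro y _
        simp only [Polynomial.eval_add, Polynomial.eval_mul]
        ring
      rw [hsplit] at ftcB
      have degB1 : qB1.natDegree ≤ m + 1 := by
        refine (Polynomial.natDegree_add_le _ _).trans (max_le
          ((Polynomial.natDegree_add_le _ _).trans (max_le ?_ ?_)) ?_)
        · exact (Polynomial.natDegree_C_mul_le _ _).trans (by rw [hPdeg])
        · exact (ndXd _).trans (by rw [hPdeg])
        · exact (Polynomial.natDegree_C_mul_le _ _).trans ((ndd _).trans (by rw [hPdeg]))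
      have degB2 : qB2.natDegree ≤ m + 1 := by
        refine (Polynomial.natDegree_add_le _ _).trans (max_le ?_ ?_)
        · exact (ndXd _).trans (by rw [hPdeg]; omega)
        · exact (Polynomial.natDegree_C_mul_le _ _).trans ((ndd _).trans (by rw [hPdeg]; omega))
      rw [orth_eval hα hβ ht P h hmonic horth (m+1) qB2 degB2] at ftcB
      have hcB2 : qB2.coeff (m+1) = 0 := by
        rw [hqB2]
        simp only [Polynomial.coeff_add, Polynomial.coeff_C_mul, helperD,
          Polynomial.coeff_derivative, hPhigh m (m+1) (by omega), hPhigh m (m+2) (by omega)]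
        ring
      rw [hcB2, zero_mul] at ftcB
      rw [E1 hα hβ ht P h hmonic horth m qB1 degB1] at ftcB
      have hcB1a : qB1.coeff (m+1) = (1+γ+α+β) + ((m:ℝ)+1) := by
        rw [hqB1]
        simp only [Polynomial.coeff_add, Polynomial.coeff_C_mul, helperD,
          Polynomial.coeff_derivative, hPlead (m+1), hPhigh (m+1) (m+2) (by omega)]
        push_cast; ring
      have hcB1b : qB1.coeff m = (1+γ+α+β) * (P (m+1)).coeff m
          + (P (m+1)).coeff m * (m:ℝ) - t*((m:ℝ)+1) := by
        rw [hqB1]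
        simp only [Polynomial.coeff_add, Polynomial.coeff_C_mul, helperD,
          Polynomial.coeff_derivative, hPlead (m+1)]
        push_cast; ring
      rw [hcB1a, hcB1b] at ftcB
      have hIr : (∫ y in (0:ℝ)..1, (P (m+1) * P m).eval y * genJacobiWeight α β γ t y / (1-y))
          = r (m+1) * h m / β := by
        have hhm : h m ≠ 0 := (hpos m).ne'
        have h1 := hr (m+1) (by omega)
        norm_num at h1
        have h2 : (∫ y in (0:ℝ)..1, (P (m+1) * P m).eval y * genJacobiWeight α β γ t y / (1-y))
            = ∫ y in (0:ℝ)..1, (P m).eval y * (P (m+1)).eval y * genJacobiWeight α β γ t y / (1 - y) := by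
          apply intervalIntegral.integral_congr
          intro y _
          simp only [Polynomial.eval_mul]
          ring
        rw [h2, h1]
        field_simp
      have hIrs : (∫ y in (0:ℝ)..1, (P (m+1) * P m).eval y * genJacobiWeight α β γ t y / y)
          = rs (m+1) * h m / α := by
        have hhm : h m ≠ 0 := (hpos m).ne'
        have h1 := hrs (m+1) (by omega)
        norm_num at h1
        have h2 : (∫ y in (0:ℝ)..1, (P (m+1) * P m).eval y * genJacobiWeight α β γ t y / y)
            = ∫ y in (0:ℝ)..1, (P m).eval y * (P (m+1)).eval y * genJacobiWeight α β γ t y / y := by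
          apply intervalIntegral.integral_congr
          intro y _
          simp only [Polynomial.eval_mul]
          ring
        rw [h2, h1]
        field_simp
      rw [hIr, hIrs] at ftcB
      have e2 : α * t * (rs (m+1) * h m / α) = t * (rs (m+1) * h m) := by
        field_simp
      have e3 : β * (1-t) * (r (m+1) * h m / β) = (1-t) * (r (m+1) * h m) := by
        field_simp
      rw [e2, e3] at ftcB
      -- ftcB : (coeff stuff) * h m - t*(rs*h m) - (1-t)*(r*h m) + 0 = 0
      have hhne : h m ≠ 0 := (hpos m).ne'
      rw [Polynomial.coeff_X_mul]
      have hprod : ((P (m+1)).coeff m - (-t*((m:ℝ)+1) - t*rs (m+1) - (1-t)*r (m+1))) * h m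
          = 0 := by linear_combination -ftcB
      rcases mul_eq_zero.mp hprod with h1 | h1
      · push_cast
        linarith
      · exact absurd h1 hhne
  -- Rstar
  set Rs : ℝ := α / h n * ∫ y in (0:ℝ)..1,
    (P n).eval y ^ 2 * genJacobiWeight α β γ t y / y with hRsdef
  have hhne : h n ≠ 0 := (hpos n).ne'
  have hIRs : (∫ y in (0:ℝ)..1, (P n).eval y ^ 2 * genJacobiWeight α β γ t y / y)
      = Rs * h n / α := by
    rw [hRsdef]; field_simp
  have hIR : (∫ y in (0:ℝ)..1, (P n).eval y ^ 2 * genJacobiWeight α β γ t y / (1-y))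
      = R n * h n / β := by
    rw [hR n]; field_simp
  have e2 : α * t * (Rs * h n / α) = t * (Rs * h n) := by field_simp
  have e3 : β * (1-t) * (R n * h n / β) = (1-t) * (R n * h n) := by field_simp
  -- eqA
  have eqA : (1+γ+α+β) + 2*(n:ℝ) - t*Rs - (1-t)*R n = 0 := by
    have ftcA := ftc1 (γ := γ) hα hβ ht ((P n)^2)
    set qA := Polynomial.C (1+γ+α+β) * P n + Polynomial.C 2 * (Polynomial.X * derivative (P n))
      + Polynomial.C (-(2*t)) * derivative (P n) with hqA
    have hpoly : Polynomial.C (1+γ+α+β) * ((P n)^2)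
        + (Polynomial.X - Polynomial.C t) * Polynomial.derivative ((P n)^2)
        = qA * P n := by
      rw [Polynomial.derivative_sq, hqA]
      simp only [Polynomial.C_mul, Polynomial.C_neg]
      ring
    rw [hpoly] at ftcA
    simp only [Polynomial.eval_mul, Polynomial.eval_pow] at ftcA
    have degA : qA.natDegree ≤ n := by
      refine (Polynomial.natDegree_add_le _ _).trans (max_le
        ((Polynomial.natDegree_add_le _ _).trans (max_le ?_ ?_)) ?_)
      · exact (Polynomial.natDegree_C_mul_le _ _).trans (by rw [hPdeg])
      · exact (Polynomial.natDegree_C_mul_le _ _).trans ((ndXd _).trans (by rw [hPdeg]))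
      · exact (Polynomial.natDegree_C_mul_le _ _).trans ((ndd _).trans (by rw [hPdeg]))
    rw [orth_eval hα hβ ht P h hmonic horth n qA degA] at ftcA
    have hcA : qA.coeff n = (1+γ+α+β) + 2*(n:ℝ) := by
      rw [hqA]
      simp only [Polynomial.coeff_add, Polynomial.coeff_C_mul, helperD,
        Polynomial.coeff_derivative, hPlead n, hPhigh n (n+1) (by omega)]
      push_cast; ring
    rw [hcA, hIRs, hIR, e2, e3] at ftcA
    have hprod : ((1+γ+α+β) + 2*(n:ℝ) - t*Rs - (1-t)*R n) * h n = 0 := by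
      linear_combination ftcA
    rcases mul_eq_zero.mp hprod with h1 | h1
    · exact h1
    · exact absurd h1 hhne
  -- eqC
  have eqC : (1+t+γ+α*(1+t)+β*t) + (-(2+γ+α+β)) * (Polynomial.X * P n).coeff n
      - 2*((Polynomial.X * P n).coeff n)*((n:ℝ)-1) + 2*(1+t)*(n:ℝ)
      - ((-(2+γ+α+β)) - 2*(n:ℝ)) * (P (n+1)).coeff n - t*Rs = 0 := by
    have ftcC := ftc2 (γ := γ) hα hβ ht ((P n)^2)
    set qC := Polynomial.C (1+t+γ+α*(1+t)+β*t) * P n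
      + Polynomial.C (-(2+γ+α+β)) * (Polynomial.X * P n)
      + Polynomial.C (-2) * (Polynomial.X * (Polynomial.X * derivative (P n)))
      + Polynomial.C (2*(1+t)) * (Polynomial.X * derivative (P n))
      + Polynomial.C (-(2*t)) * derivative (P n) with hqC
    have hpoly : Polynomial.C (1+t) * ((P n)^2) - Polynomial.C 2 * Polynomial.X * ((P n)^2)
        + (Polynomial.C 1 - Polynomial.X) * (Polynomial.X - Polynomial.C t)
          * Polynomial.derivative ((P n)^2)
        + (Polynomial.C γ * (Polynomial.C 1 - Polynomial.X)
          + Polynomial.C α * (Polynomial.C (1+t) - Polynomial.X)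
          - Polynomial.C β * (Polynomial.X - Polynomial.C t)) * ((P n)^2)
        = qC * P n := by
      rw [Polynomial.derivative_sq, hqC]
      simp only [Polynomial.C_mul, Polynomial.C_neg, Polynomial.C_add, Polynomial.C_1]
      ring
    rw [hpoly] at ftcC
    simp only [Polynomial.eval_mul, Polynomial.eval_pow] at ftcC
    have degC : qC.natDegree ≤ n + 1 := by
      refine (Polynomial.natDegree_add_le _ _).trans (max_le
        ((Polynomial.natDegree_add_le _ _).trans (max_le
          ((Polynomial.natDegree_add_le _ _).trans (max_le
            ((Polynomial.natDegree_add_le _ _).trans (max_le ?_ ?_)) ?_)) ?_)) ?_)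
      · exact (Polynomial.natDegree_C_mul_le _ _).trans (by rw [hPdeg]; omega)
      · exact (Polynomial.natDegree_C_mul_le _ _).trans ((ndXm _).trans (by rw [hPdeg]))
      · exact (Polynomial.natDegree_C_mul_le _ _).trans ((ndXXd _).trans (by rw [hPdeg]))
      · exact (Polynomial.natDegree_C_mul_le _ _).trans ((ndXd _).trans (by rw [hPdeg]; omega))
      · exact (Polynomial.natDegree_C_mul_le _ _).trans ((ndd _).trans (by rw [hPdeg]; omega))
    rw [E1 hα hβ ht P h hmonic horth n qC degC] at ftcC
    have hcC1 : qC.coeff (n+1) = (-(2+γ+α+β)) - 2*(n:ℝ) := by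
      rw [hqC]
      simp only [Polynomial.coeff_add, Polynomial.coeff_C_mul, helperD, helperD3,
        Polynomial.coeff_X_mul, Polynomial.coeff_derivative, hPlead n,
        hPhigh n (n+1) (by omega), hPhigh n (n+2) (by omega)]
      push_cast; ring
    have hcC0 : qC.coeff n = (1+t+γ+α*(1+t)+β*t)
        + (-(2+γ+α+β)) * (Polynomial.X * P n).coeff n
        - 2*((Polynomial.X * P n).coeff n)*((n:ℝ)-1) + 2*(1+t)*(n:ℝ) := by
      rw [hqC]
      simp only [Polynomial.coeff_add, Polynomial.coeff_C_mul, helperD, helperD3,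
        Polynomial.coeff_derivative, hPlead n, hPhigh n (n+1) (by omega)]
      push_cast; ring
    rw [hcC1, hcC0, hIRs, e2] at ftcC
    have hprod : ((1+t+γ+α*(1+t)+β*t) + (-(2+γ+α+β)) * (Polynomial.X * P n).coeff n
        - 2*((Polynomial.X * P n).coeff n)*((n:ℝ)-1) + 2*(1+t)*(n:ℝ)
        - ((-(2+γ+α+β)) - 2*(n:ℝ)) * (P (n+1)).coeff n - t*Rs) * h n = 0 := by
      linear_combination ftcC
    rcases mul_eq_zero.mp hprod with h1 | h1
    · exact h1
    · exact absurd h1 hhne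
  -- assemble
  have hS := pstep n
  linear_combination eqA + 2 * eqB - eqC + (2*(n:ℝ)+2+α+β+γ) * hS
end
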